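/- arXiv:2401.02302 — 13 statements merged into one kernel-verified Lean document; each statement's English description precedes it below -/
import Mathlib

section
/- For all ultrafilters F and G on ℕ, the following are equivalent: (i) F ∣~ G; (ii) every set A ∈ F that is upward closed under divisibility (i.e. A↑ = A and A ≠ ∅) belongs to G; (iii) every set A ∈ G that is downward closed under divisibility (i.e. A↓ = A, where A↓ = {n ∈ ℕ : ∃a ∈ A, n ∣ a}) belongs to F. -/
/-- Upward closure under divisibility: `A↑ = {n : ∃ a ∈ A, a ∣ n}`. -/
def upcl (A : Set ℕ+) : Set ℕ+ := {n | ∃ a ∈ A, a ∣ n}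

/-- Downward closure under divisibility: `A↓ = {n : ∃ a ∈ A, n ∣ a}`. -/
def downcl (A : Set ℕ+) : Set ℕ+ := {n | ∃ a ∈ A, n ∣ a}

/-- `F ∣~ G` iff `A↑ ∈ G` for every `A ∈ F`. -/
def udvd (F G : Ultrafilter ℕ+) : Prop := ∀ A ∈ F, upcl A ∈ G

lemma subset_upcl (A : Set ℕ+) : A ⊆ upcl A := fun n hn => ⟨n, hn, dvd_refl n⟩

lemma upcl_upcl (A : Set ℕ+) : upcl (upcl A) = upcl A := by
  apply Set.Subset.antisymm
  · rintro n ⟨a, ⟨b, hb, hba⟩, han⟩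
    exact ⟨b, hb, hba.trans han⟩
  · exact subset_upcl _

theorem stmt0 (F G : Ultrafilter ℕ+) :
    (udvd F G ↔ ∀ A ∈ F, upcl A = A → A.Nonempty → A ∈ G) ∧
    (udvd F G ↔ ∀ A ∈ G, downcl A = A → A ∈ F) := by
  constructor
  · constructor
    · intro h A hA hup _
      have := h A hA
      rwa [hup] at this
    · intro h A hA
      have hAF : upcl A ∈ F := F.toFilter.mem_of_superset hA (subset_upcl A)
      refine h (upcl A) hAF (upcl_upcl A) ?_
      rcases F.nonempty_of_mem hA with ⟨a, ha⟩
      exact ⟨a, subset_upcl A ha⟩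
  · constructor
    · intro h A hA hdown
      by_contra hAF
      have hc : Aᶜ ∈ F := (Ultrafilter.compl_mem_iff_notMem).2 hAF
      have hup : upcl Aᶜ ∈ G := h Aᶜ hc
      have : (upcl Aᶜ ∩ A).Nonempty := G.nonempty_of_mem (G.toFilter.inter_mem hup hA)
      rcases this with ⟨n, ⟨a, haC, han⟩, hnA⟩
      exact haC (hdown ▸ ⟨n, hnA, han⟩)
    · intro h A hA
      by_contra hG
      have hc : (upcl A)ᶜ ∈ G := (Ultrafilter.compl_mem_iff_notMem).2 hG
      have hdown : downcl ((upcl A)ᶜ) = (upcl A)ᶜ := by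
        apply Set.Subset.antisymm
        · rintro n ⟨b, hb, hnb⟩ hn
          rcases hn with ⟨a, ha, hain⟩
          exact hb ⟨a, ha, hain.trans hnb⟩
        · exact fun n hn => ⟨n, hn, dvd_refl n⟩
      have : (upcl A)ᶜ ∈ F := h _ hc hdown
      exact (Ultrafilter.compl_mem_iff_notMem).1 this
        (F.toFilter.mem_of_superset hA (subset_upcl A))
end

section
/- There exists an ultrafilter F on ℕ that contains every nonempty upward closed subset of ℕ; moreover, an ultrafilter F contains every nonempty upward closed subset of ℕ if and only if G ∣~ F holds for every ultrafilter G on ℕ. In particular the class MAX = {F ∈ βℕ : ∀G ∈ βℕ, G ∣~ F} is nonempty. -/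
/-!
An upward closed set containing `a` contains all multiples of `a`, so an ultrafilter contains every
nonempty upward closed set iff it contains the sets `a↑` of multiples of every `a`, i.e. iff
`a ∣~ F` for every principal `a`. The sets `a↑` have the finite intersection property, since
`(a * b)↑ ⊆ a↑ ∩ b↑`, so some ultrafilter contains them all; and such an `F` satisfies `G ∣~ F` for
every `G`, because `A↑` is upward closed and nonempty whenever `A ∈ G`.
-/

lemma mem_upcl_singleton {a n : ℕ+} : n ∈ upcl {a} ↔ a ∣ n := by
  simp [upcl]

lemma upcl_mono {A B : Set ℕ+} (h : A ⊆ B) : upcl A ⊆ upcl B :=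
  fun _ ⟨a, ha, han⟩ => ⟨a, h ha, han⟩

lemma upcl_singleton_subset {A : Set ℕ+} (hA : upcl A = A) {a : ℕ+} (ha : a ∈ A) :
    upcl {a} ⊆ A :=
  hA ▸ upcl_mono (Set.singleton_subset_iff.2 ha)

lemma udvd_pure_iff {a : ℕ+} {F : Ultrafilter ℕ+} : udvd (pure a) F ↔ upcl {a} ∈ F := by
  refine ⟨fun h => h {a} rfl, fun h A hA => F.mem_of_superset h (upcl_mono ?_)⟩
  exact Set.singleton_subset_iff.2 hA

lemma forall_upClosed_mem_iff (F : Ultrafilter ℕ+) :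
    (∀ A : Set ℕ+, upcl A = A → A.Nonempty → A ∈ F) ↔ ∀ a : ℕ+, upcl {a} ∈ F := by
  refine ⟨fun h a => h _ (upcl_upcl _) ⟨a, subset_upcl _ rfl⟩, ?_⟩
  rintro h A hA ⟨a, ha⟩
  exact F.mem_of_superset (h a) (upcl_singleton_subset hA ha)

lemma exists_ultrafilter_forall_upcl_singleton_mem :
    ∃ F : Ultrafilter ℕ+, ∀ a : ℕ+, upcl {a} ∈ F := by
  have directed : Directed (· ≥ ·) fun a : ℕ+ => Filter.principal (upcl {a}) := by
    intro a b
    refine ⟨a * b, Filter.principal_mono.2 ?_, Filter.principal_mono.2 ?_⟩ <;> intro n hn <;>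
      rw [mem_upcl_singleton] at hn ⊢
    exacts [(dvd_mul_right a b).trans hn, (dvd_mul_left b a).trans hn]
  have : (⨅ a : ℕ+, Filter.principal (upcl {a})).NeBot :=
    Filter.iInf_neBot_of_directed directed fun a =>
      Filter.principal_neBot_iff.2 ⟨a, subset_upcl _ rfl⟩
  obtain ⟨F, hF⟩ := Ultrafilter.exists_le (⨅ a : ℕ+, Filter.principal (upcl {a}))
  exact ⟨F, fun a => hF (Filter.mem_iInf_of_mem a (Filter.mem_principal_self _))⟩

theorem stmt1 :
    (∃ F : Ultrafilter ℕ+, ∀ A : Set ℕ+, upcl A = A → A.Nonempty → A ∈ F) ∧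
    (∀ F : Ultrafilter ℕ+,
      (∀ A : Set ℕ+, upcl A = A → A.Nonempty → A ∈ F) ↔
        ∀ G : Ultrafilter ℕ+, udvd G F) := by
  refine ⟨?_, fun F => ⟨?_, fun h => ?_⟩⟩
  · obtain ⟨F, hF⟩ := exists_ultrafilter_forall_upcl_singleton_mem
    exact ⟨F, (forall_upClosed_mem_iff F).2 hF⟩
  · intro hF G A hA
    exact hF _ (upcl_upcl A) ((G.nonempty_of_mem hA).mono (subset_upcl A))
  · exact (forall_upClosed_mem_iff F).2 fun a => udvd_pure_iff.1 (h (pure a))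
end

section
/- Let (I, ≤) be a nonempty linearly ordered set and ⟨F_i : i ∈ I⟩ a family of ultrafilters on ℕ such that F_i ∣~ F_j whenever i ≤ j. Let W_U be an ultrafilter on I containing every final segment {j ∈ I : i ≤ j} (i ∈ I), and W_L an ultrafilter on I containing every initial segment {j ∈ I : j ≤ i} (i ∈ I). Set G_U = lim_{i→W_U} F_i and G_L = lim_{i→W_L} F_i. Then: (a) F_i ∣~ G_U for every i ∈ I, and for every ultrafilter H with F_i ∣~ H for all i ∈ I we have G_U ∣~ H (so G_U represents the least upper bound of the chain); G_L ∣~ F_i for every i ∈ I, and for every H with H ∣~ F_i for all i we have H ∣~ G_L (so G_L represents the greatest lower bound); (b) {A ∈ G_U : A nonempty and upward closed} = ⋃_{i∈I} {A ∈ F_i : A nonempty and upward closed}, and {A ∈ G_L : A nonempty and upward closed} = ⋂_{i∈I} {A ∈ F_i : A nonempty and upward closed}. -/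
/-- The limit `lim_{i→W} F_i`: `A ∈ lim` iff `{i : A ∈ F i} ∈ W`. -/
def ulim {I : Type} (W : Ultrafilter I) (F : I → Ultrafilter ℕ+) : Ultrafilter ℕ+ :=
  W.bind F

lemma mem_ulim {I : Type} (W : Ultrafilter I) (F : I → Ultrafilter ℕ+) (A : Set ℕ+) :
    A ∈ ulim W F ↔ {i | A ∈ F i} ∈ W := by
  show A ∈ Filter.bind (W : Filter I) (fun i => (F i : Filter ℕ+)) ↔ _
  rw [Filter.mem_bind']
  rfl

theorem stmt3 {I : Type} [LinearOrder I] [Nonempty I]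
    (F : I → Ultrafilter ℕ+) (hchain : ∀ i j : I, i ≤ j → udvd (F i) (F j))
    (WU WL : Ultrafilter I)
    (hWU : ∀ i : I, {j : I | i ≤ j} ∈ WU)
    (hWL : ∀ i : I, {j : I | j ≤ i} ∈ WL) :
    (∀ i : I, udvd (F i) (ulim WU F)) ∧
    (∀ H : Ultrafilter ℕ+, (∀ i : I, udvd (F i) H) → udvd (ulim WU F) H) ∧
    (∀ i : I, udvd (ulim WL F) (F i)) ∧
    (∀ H : Ultrafilter ℕ+, (∀ i : I, udvd H (F i)) → udvd H (ulim WL F)) ∧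
    ({A : Set ℕ+ | A ∈ ulim WU F ∧ A.Nonempty ∧ upcl A = A} =
      ⋃ i : I, {A : Set ℕ+ | A ∈ F i ∧ A.Nonempty ∧ upcl A = A}) ∧
    ({A : Set ℕ+ | A ∈ ulim WL F ∧ A.Nonempty ∧ upcl A = A} =
      ⋂ i : I, {A : Set ℕ+ | A ∈ F i ∧ A.Nonempty ∧ upcl A = A}) := by
  have h1 : ∀ i : I, udvd (F i) (ulim WU F) := by
    intro i A hA
    rw [mem_ulim]
    exact WU.toFilter.mem_of_superset (hWU i) fun j hj => hchain i j hj A hA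
  have h3 : ∀ i : I, udvd (ulim WL F) (F i) := by
    intro i A hA
    rw [mem_ulim] at hA
    obtain ⟨j, hj1, hj2⟩ := Ultrafilter.nonempty_of_mem (WL.toFilter.inter_mem hA (hWL i))
    exact hchain j i hj2 A hj1
  refine ⟨h1, ?_, h3, ?_, ?_, ?_⟩
  · intro H hH A hA
    rw [mem_ulim] at hA
    obtain ⟨i, hi⟩ := Ultrafilter.nonempty_of_mem hA
    exact hH i A hi
  · intro H hH A hA
    rw [mem_ulim]
    have : {i | upcl A ∈ F i} = Set.univ := Set.eq_univ_of_forall fun i => hH i A hA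
    rw [this]; exact Filter.univ_mem
  · ext A
    simp only [Set.mem_setOf_eq, Set.mem_iUnion]
    constructor
    · rintro ⟨hA, hne, hcl⟩
      rw [mem_ulim] at hA
      obtain ⟨i, hi⟩ := Ultrafilter.nonempty_of_mem hA
      exact ⟨i, hi, hne, hcl⟩
    · rintro ⟨i, hi, hne, hcl⟩
      have := h1 i A hi
      rw [hcl] at this
      exact ⟨this, hne, hcl⟩
  · ext A
    simp only [Set.mem_setOf_eq, Set.mem_iInter]
    constructor
    · rintro ⟨hA, hne, hcl⟩ i
      have := h3 i A hA
      rw [hcl] at this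
      exact ⟨this, hne, hcl⟩
    · intro h
      obtain ⟨i⟩ := ‹Nonempty I›
      obtain ⟨hAi, hne, hcl⟩ := h i
      refine ⟨?_, hne, hcl⟩
      rw [mem_ulim]
      have : {j | A ∈ F j} = Set.univ := Set.eq_univ_of_forall fun j => (h j).1
      rw [this]; exact Filter.univ_mem
end

section
/- An ultrafilter P on ℕ with P ≠ 1 (P not the principal ultrafilter at 1) is prime, i.e. every ultrafilter G with G ∣~ P satisfies G = 1 or G = P, if and only if ℙ ∈ P. -/
/-- The set of primes, as a subset of the positive integers. -/
def primes : Set ℕ+ := {p | (p : ℕ).Prime}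

theorem stmt4 (P : Ultrafilter ℕ+) (hP : P ≠ pure 1) :
    (∀ G : Ultrafilter ℕ+, udvd G P → G = pure 1 ∨ G = P) ↔ primes ∈ P := by
  constructor
  · intro h
    by_contra hpr
    -- counterexample: push forward along minimal prime factor
    set f : ℕ+ → ℕ+ := fun n => ⟨(n : ℕ).minFac, Nat.minFac_pos _⟩ with hf
    set G : Ultrafilter ℕ+ := Ultrafilter.map f P with hG
    have h1P : ({1}ᶜ : Set ℕ+) ∈ P := by
      rw [Ultrafilter.compl_mem_iff_notMem]
      intro h1
      obtain ⟨x, hx, hxe⟩ := Ultrafilter.eq_pure_of_finite_mem (Set.finite_singleton 1) h1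
      exact hP (hxe.trans (by simp at hx; rw [hx]))
    have hne1 : ∀ n : ℕ+, n ≠ 1 → (n : ℕ) ≠ 1 := by
      intro n hn h; exact hn (PNat.coe_injective (by simpa using h))
    have hGP : udvd G P := by
      intro A hA
      have : ({1}ᶜ ∩ f ⁻¹' A : Set ℕ+) ∈ P := Filter.inter_mem h1P (Ultrafilter.mem_map.mp hA)
      refine (P : Filter ℕ+).mem_of_superset this ?_
      rintro n ⟨hn1, hnA⟩
      exact ⟨f n, hnA, PNat.dvd_iff.mpr (Nat.minFac_dvd _)⟩
    rcases h G hGP with h1 | hP'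
    · -- G = pure 1 impossible since {1} ∉ P (f⁻¹ {1} = {1})
      have : ({1} : Set ℕ+) ∈ G := h1 ▸ Ultrafilter.mem_pure.mpr rfl
      have : f ⁻¹' {1} ∈ P := Ultrafilter.mem_map.mp this
      have hsub : f ⁻¹' ({1} : Set ℕ+) ⊆ {1} := by
        intro n hn
        simp only [Set.mem_preimage, Set.mem_singleton_iff] at hn ⊢
        by_contra hne
        have hm : (n : ℕ).minFac = 1 := congrArg (fun x : ℕ+ => (x : ℕ)) hn
        exact (Nat.minFac_prime (hne1 n hne)).ne_one hm
      have : ({1} : Set ℕ+) ∈ P := (P : Filter ℕ+).mem_of_superset this hsub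
      exact (Ultrafilter.compl_mem_iff_notMem.mp h1P) this
    · -- G = P impossible since primes ∈ G but primes ∉ P
      apply hpr
      rw [← hP']
      refine Ultrafilter.mem_map.mpr ((P : Filter ℕ+).mem_of_superset h1P ?_)
      intro n hn
      exact Nat.minFac_prime (hne1 n hn)
  · intro hpr G hG
    by_cases h1 : ({1} : Set ℕ+) ∈ G
    · left
      obtain ⟨x, hx, hxe⟩ := Ultrafilter.eq_pure_of_finite_mem (Set.finite_singleton 1) h1
      simp at hx; rw [hxe, hx]
    · right
      symm
      rw [← Ultrafilter.coe_le_coe]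
      intro A hA
      have h1G : ({1}ᶜ : Set ℕ+) ∈ G := Ultrafilter.compl_mem_iff_notMem.mpr h1
      have hA' : upcl ({1}ᶜ ∩ A) ∈ P := hG _ (Filter.inter_mem h1G hA)
      have : (upcl ({1}ᶜ ∩ A) ∩ primes : Set ℕ+) ∈ P := Filter.inter_mem hA' hpr
      refine (P : Filter ℕ+).mem_of_superset this ?_
      rintro p ⟨⟨a, ⟨ha1, haA⟩, hadvd⟩, hp⟩
      rcases Nat.Prime.eq_one_or_self_of_dvd hp _ (PNat.dvd_iff.mp hadvd) with h | h
      · exact absurd (PNat.coe_injective (by simpa using h)) ha1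
      · have hap : a = p := PNat.coe_injective h
        exact hap ▸ haA
end

section
/- If P is an ultrafilter on ℕ with ℙ ∈ P, and F, G are ultrafilters on ℕ such that P ∣~ F·G, then P ∣~ F or P ∣~ G. -/
/-- The extension of multiplication to `βℕ`:
`A ∈ F·G` iff `{m : {n : m*n ∈ A} ∈ G} ∈ F`. -/
def umul (F G : Ultrafilter ℕ+) : Ultrafilter ℕ+ :=
  F.bind fun m => Ultrafilter.map (fun n => m * n) G

lemma mem_umul {A : Set ℕ+} {F G : Ultrafilter ℕ+} :
    A ∈ umul F G ↔ {m | {n | m * n ∈ A} ∈ G} ∈ F := Iff.rfl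

theorem stmt5 (P F G : Ultrafilter ℕ+) (hP : primes ∈ P)
    (h : udvd P (umul F G)) : udvd P F ∨ udvd P G := by
  by_contra hc
  push_neg at hc
  obtain ⟨h1, h2⟩ := hc
  simp only [udvd, not_forall] at h1 h2
  obtain ⟨A, hA, hAF⟩ := h1
  obtain ⟨B, hB, hBG⟩ := h2
  set C : Set ℕ+ := A ∩ B ∩ primes with hCdef
  have hC : C ∈ P := Filter.inter_mem (Filter.inter_mem hA hB) hP
  have hCF : upcl C ∉ F := fun hx =>
    hAF (F.toFilter.mem_of_superset hx (upcl_mono (fun x hx => hx.1.1)))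
  have hCG : upcl C ∉ G := fun hx =>
    hBG (G.toFilter.mem_of_superset hx (upcl_mono (fun x hx => hx.1.2)))
  have hUC : upcl C ∈ umul F G := h C hC
  rw [mem_umul] at hUC
  -- complement of upcl C is in F
  have hcompl : (upcl C)ᶜ ∈ F := (Ultrafilter.compl_mem_iff_notMem).2 hCF
  have : {m | {n | m * n ∈ upcl C} ∈ G} ∩ (upcl C)ᶜ ∈ F :=
    Filter.inter_mem hUC hcompl
  obtain ⟨m, hm1, hm2⟩ := F.nonempty_of_mem this
  apply hCG
  refine G.toFilter.mem_of_superset hm1 ?_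
  rintro n ⟨p, hp, hpd⟩
  have hprime : (p : ℕ).Prime := hp.2
  have : (p : ℕ) ∣ (m : ℕ) * (n : ℕ) := by
    have := PNat.dvd_iff.1 hpd  -- maybe wrong name
    simpa using this
  rcases (Nat.Prime.dvd_mul hprime).1 this with hdm | hdn
  · exact absurd ⟨p, hp, PNat.dvd_iff.2 hdm⟩ hm2
  · exact ⟨p, hp, PNat.dvd_iff.2 hdn⟩
end

section
/- For every n ≥ 1 and every ultrafilter F on ℕ: L_n ∈ F if and only if there exists a pattern α with σ(α) = n such that F_α ⊆ F. -/
open scoped Classical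

/-- A pattern assigns a multiplicity in `ω` to each pair `(P, k)` of an ultrafilter
on `ℕ` and an exponent `k`, with finite support. -/
abbrev Pat : Type := ((Ultrafilter ℕ+) × ℕ) →₀ ℕ

/-- A pattern is only supported on pairs `(P, k)` where `ℙ ∈ P` and `k ≥ 1`. -/
def IsPattern (α : Pat) : Prop :=
  ∀ Pk ∈ α.support, primes ∈ Pk.1 ∧ 0 < Pk.2

/-- `σ(α) = Σ k·α(P,k)`. -/
def sigmaPat (α : Pat) : ℕ := ∑ Pk ∈ α.support, Pk.2 * α Pk

/-- Given a pattern `α` and a choice `A` of a set of primes for each ultrafilter,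
the set `{∏_i ∏_j p_{i,j}^{k_i} : p_{i,j} ∈ A(P_i) pairwise distinct}`. -/
def patBaseSet (α : Pat) (A : Ultrafilter ℕ+ → Set ℕ+) : Set ℕ+ :=
  { x | ∃ p : (Pk : (Ultrafilter ℕ+) × ℕ) → Fin (α Pk) → ℕ+,
      (∀ Pk j, p Pk j ∈ A Pk.1) ∧
      Function.Injective (fun q : Σ Pk : (Ultrafilter ℕ+) × ℕ, Fin (α Pk) => p q.1 q.2) ∧
      x = ∏ Pk ∈ α.support, ∏ j : Fin (α Pk), (p Pk j) ^ Pk.2 }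

/-- The family `F_α`: all sets obtained from choices of sets `A(P) ∈ P`, `A(P) ⊆ ℙ`,
with `A(P) ∩ A(P') = ∅` for distinct `P, P'` occurring in the support of `α`. -/
def FamF (α : Pat) : Set (Set ℕ+) :=
  { S | ∃ A : Ultrafilter ℕ+ → Set ℕ+,
      (∀ Pk ∈ α.support, A Pk.1 ∈ Pk.1 ∧ A Pk.1 ⊆ primes) ∧
      (∀ Pk ∈ α.support, ∀ Pk' ∈ α.support, Pk.1 ≠ Pk'.1 → A Pk.1 ∩ A Pk'.1 = ∅) ∧
      S = patBaseSet α A }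

/-- `L_n`: the positive integers which are products of exactly `n` primes
(counted with multiplicity). -/
def levelSet (n : ℕ) : Set ℕ+ :=
  { x | ∃ l : List ℕ+, l.length = n ∧ (∀ p ∈ l, (p : ℕ).Prime) ∧ l.prod = x }

/-!
For a pattern `α`, distinct ultrafilters are disjoint, so one can choose pairwise disjoint sets
`A(P) ∈ P` of primes; the resulting member of `F_α` consists of numbers with `σ(α)` prime
factors.

Conversely, if `L_n ∈ F`, the exponents of `x` listed along its prime factors in increasing order
form a composition of `n`, so by finiteness they equal a fixed `(c_1, …, c_r)` for `F`-almost all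
`x`, and then `x = ∏ q_i(x) ^ c_i` with `q_i(x)` the `i`-th prime factor of `x`. Let `P_i` be the
image of `F` under `q_i` and let `α(P, k)` count the `i` with `(P_i, c_i) = (P, k)`. A member of
`F_α` given by sets `A(P)` contains every such `x` with `q_i(x) ∈ A(P_i)` for all `i`, and these
`x` form an `F`-large set.
-/

open ArithmeticFunction
open scoped ArithmeticFunction.Omega

lemma PNat.coe_finset_prod {ι : Type*} (s : Finset ι) (f : ι → ℕ+) :
    ((∏ i ∈ s, f i : ℕ+) : ℕ) = ∏ i ∈ s, (f i : ℕ) :=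
  map_prod PNat.coeMonoidHom f s

lemma PNat.coe_list_prod (l : List ℕ+) : ((l.prod : ℕ+) : ℕ) = (l.map (↑)).prod :=
  map_list_prod PNat.coeMonoidHom l

lemma cardFactors_finset_prod {ι : Type*} {s : Finset ι} {f : ι → ℕ}
    (hf : ∀ i ∈ s, f i ≠ 0) :
    Ω (∏ i ∈ s, f i) = ∑ i ∈ s, Ω (f i) := by
  rw [Finset.prod_eq_multiset_prod, cardFactors_multiset_prod, Multiset.map_map]
  · rfl
  · simpa [← Finset.prod_eq_multiset_prod, Finset.prod_ne_zero_iff] using hf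

lemma mem_levelSet_iff {n : ℕ} {x : ℕ+} : x ∈ levelSet n ↔ Ω x = n := by
  constructor
  · rintro ⟨l, rfl, hl, rfl⟩
    rw [cardFactors_apply, ← (Nat.primeFactorsList_unique (PNat.coe_list_prod l).symm
      (by simpa using hl)).length_eq, List.length_map]
  · intro h
    refine ⟨(x : ℕ).primeFactorsList.map Nat.toPNat', by simp [← h, cardFactors_apply],
      fun p hp => ?_, PNat.coe_injective ?_⟩
    · obtain ⟨q, hq, rfl⟩ := List.mem_map.1 hp
      rw [PNat.toPNat'_coe (Nat.pos_of_mem_primeFactorsList hq)]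
      exact Nat.prime_of_mem_primeFactorsList hq
    · rw [PNat.coe_list_prod, List.map_map,
        List.map_congr_left (f := PNat.val ∘ Nat.toPNat') (g := id)
          fun p hp => PNat.toPNat'_coe (Nat.pos_of_mem_primeFactorsList hp),
        List.map_id, Nat.prod_primeFactorsList x.ne_zero]

lemma patBaseSet_subset_levelSet {α : Pat} {A : Ultrafilter ℕ+ → Set ℕ+}
    (hA : ∀ Pk ∈ α.support, A Pk.1 ⊆ primes) :
    patBaseSet α A ⊆ levelSet (sigmaPat α) := by
  rintro _ ⟨p, hpA, -, rfl⟩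
  rw [mem_levelSet_iff, PNat.coe_finset_prod,
    cardFactors_finset_prod (fun _ _ => PNat.ne_zero _), sigmaPat]
  refine Finset.sum_congr rfl fun Pk hPk => ?_
  simp_rw [PNat.coe_finset_prod, PNat.pow_coe]
  rw [cardFactors_finset_prod (fun _ _ => pow_ne_zero _ (PNat.ne_zero _))]
  simp [cardFactors_apply_prime_pow (hA Pk hPk (hpA Pk _)), mul_comm]

lemma exists_disjoint_mem_subset {X : Type*} (T : Set X) (s : Finset (Ultrafilter X))
    (hs : ∀ P ∈ s, T ∈ P) :
    ∃ A : Ultrafilter X → Set X, (∀ P ∈ s, A P ∈ P ∧ A P ⊆ T) ∧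
      (s : Set (Ultrafilter X)).PairwiseDisjoint A := by
  have hdisj : (s : Set (Ultrafilter X)).PairwiseDisjoint ((↑) : Ultrafilter X → Filter X) :=
    fun P _ Q _ hPQ => Ultrafilter.disjoint_iff_not_le.2 fun h => hPQ (Ultrafilter.coe_le_coe.1 h)
  obtain ⟨A, hAP, hA⟩ := hdisj.exists_mem_filter s.finite_toSet
  exact ⟨fun P => A P ∩ T,
    fun P hP => ⟨Filter.inter_mem (hAP P) (hs P hP), Set.inter_subset_right⟩,
    hA.mono fun _ => Set.inter_subset_left⟩

theorem levelSet_mem_of_forall_famF_mem {α : Pat} (hα : IsPattern α) {F : Ultrafilter ℕ+}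
    (hF : ∀ S ∈ FamF α, S ∈ F) : levelSet (sigmaPat α) ∈ F := by
  obtain ⟨A, hA, hdisj⟩ := exists_disjoint_mem_subset primes (α.support.image Prod.fst) (by
    simpa using fun P k hPk => (hα (P, k) (Finsupp.mem_support_iff.2 hPk)).1)
  have hA' : ∀ Pk ∈ α.support, A Pk.1 ∈ Pk.1 ∧ A Pk.1 ⊆ primes := fun Pk hPk =>
    hA _ (Finset.mem_image_of_mem _ hPk)
  refine F.mem_of_superset (hF _ ⟨A, hA', fun Pk hPk Pk' hPk' hne => ?_, rfl⟩)
    (patBaseSet_subset_levelSet fun Pk hPk => (hA' Pk hPk).2)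
  exact Set.disjoint_iff_inter_eq_empty.1 <|
    hdisj (Finset.mem_coe.2 (Finset.mem_image_of_mem _ hPk))
      (Finset.mem_coe.2 (Finset.mem_image_of_mem _ hPk')) hne

section PatternOfKeys

variable {ι : Type*} (key : ι → Ultrafilter ℕ+ × ℕ)

lemma sigmaPat_sum_single (s : Finset ι) :
    sigmaPat (∑ i ∈ s, Finsupp.single (key i) 1) = ∑ i ∈ s, (key i).2 := by
  rw [sigmaPat, ← Finsupp.sum, ← Finsupp.sum_finsetSum_index (fun _ => mul_zero _)
    (fun _ _ _ => mul_add _ _ _)]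
  simp

lemma isPattern_sum_single (s : Finset ι)
    (h : ∀ i ∈ s, primes ∈ (key i).1 ∧ 0 < (key i).2) :
    IsPattern (∑ i ∈ s, Finsupp.single (key i) 1) := by
  intro Pk hPk
  obtain ⟨i, hi, hPk⟩ := Finset.mem_biUnion.1 (Finsupp.support_finsetSum hPk)
  exact Finset.mem_singleton.1 (Finsupp.support_single_subset hPk) ▸ h i hi

variable [Fintype ι]

lemma sum_single_apply (Pk : Ultrafilter ℕ+ × ℕ) :
    (∑ i, Finsupp.single (key i) 1) Pk = ({i | key i = Pk} : Finset ι).card := by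
  simp [Finsupp.finsetSum_apply, Finsupp.single_apply, eq_comm]

lemma mem_support_sum_single (i : ι) : key i ∈ (∑ j, Finsupp.single (key j) 1).support := by
  rw [Finsupp.mem_support_iff, sum_single_apply]
  exact Finset.card_ne_zero_of_mem (Finset.mem_filter.2 ⟨Finset.mem_univ i, rfl⟩)

lemma prod_mem_patBaseSet (A : Ultrafilter ℕ+ → Set ℕ+) {q : ι → ℕ+}
    (hq : Function.Injective q) (hA : ∀ i, q i ∈ A (key i).1) :
    ∏ i, q i ^ (key i).2 ∈ patBaseSet (∑ i, Finsupp.single (key i) 1) A := by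
  let e : ∀ Pk, Fin ((∑ i, Finsupp.single (key i) 1) Pk) ≃ ({i | key i = Pk} : Finset ι) :=
    fun Pk => (Finset.equivFinOfCardEq (sum_single_apply key Pk).symm).symm
  have hkey : ∀ Pk j, key (e Pk j) = Pk := fun Pk j => (Finset.mem_filter.1 (e Pk j).2).2
  -- the `j`-th prime of block `Pk` is `q` at the `j`-th index `i` with `key i = Pk`
  refine ⟨fun Pk j => q (e Pk j), fun Pk j => by simpa only [hkey] using hA (e Pk j), ?_, ?_⟩
  · rintro ⟨Pk, j⟩ ⟨Pk', j'⟩ h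
    have hi : (e Pk j : ι) = e Pk' j' := hq h
    obtain rfl : Pk = Pk' := (hkey Pk j).symm.trans (hi ▸ hkey Pk' j')
    obtain rfl := (e Pk).injective (Subtype.ext hi)
    rfl
  · rw [← Finset.prod_fiberwise_of_maps_to fun i _ => mem_support_sum_single key i]
    refine Finset.prod_congr rfl fun Pk _ => ?_
    rw [← Finset.prod_coe_sort, ← (e Pk).prod_comp]
    simp_rw [hkey]

end PatternOfKeys

theorem exists_pattern_of_eventually_eq_prod {ι : Type*} [Fintype ι] {F : Ultrafilter ℕ+}
    {c : ι → ℕ} (hc : ∀ i, 0 < c i) {q : ℕ+ → ι → ℕ+}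
    (hq : ∀ᶠ x in F,
      Function.Injective (q x) ∧ (∀ i, q x i ∈ primes) ∧ x = ∏ i, q x i ^ c i) :
    ∃ α : Pat, IsPattern α ∧ sigmaPat α = ∑ i, c i ∧ ∀ S ∈ FamF α, S ∈ F := by
  let key : ι → Ultrafilter ℕ+ × ℕ := fun i => (F.map (q · i), c i)
  refine ⟨∑ i, Finsupp.single (key i) 1, isPattern_sum_single key _ fun i _ => ⟨?_, hc i⟩,
    sigmaPat_sum_single key _, ?_⟩
  · exact Ultrafilter.mem_map.2 (hq.mono fun x hx => hx.2.1 i)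
  · rintro S ⟨A, hA, -, rfl⟩
    have hAi : ∀ i, ∀ᶠ x in F, q x i ∈ A (key i).1 := fun i =>
      Ultrafilter.mem_map.1 (hA (key i) (mem_support_sum_single key i)).1
    filter_upwards [hq, Filter.eventually_all.2 hAi] with x hx hxA
    rw [hx.2.2]
    exact prod_mem_patBaseSet key A hx.1 hxA

def sortedPrimeFactors (m : ℕ) : List ℕ := m.primeFactors.sort

def primeExponents (m : ℕ) : List ℕ := (sortedPrimeFactors m).map m.factorization

lemma prime_of_mem_sortedPrimeFactors {m p : ℕ} (hp : p ∈ sortedPrimeFactors m) : p.Prime :=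
  Nat.prime_of_mem_primeFactors ((Finset.mem_sort _).1 hp)

lemma sum_primeExponents (m : ℕ) : (primeExponents m).sum = Ω m := by
  rw [cardFactors_eq_sum_factorization, Finsupp.sum, Nat.support_factorization, primeExponents,
    sortedPrimeFactors, ← List.sum_toFinset _ (Finset.sort_nodup _ _), Finset.sort_toFinset]

lemma pos_of_mem_primeExponents {m e : ℕ} (he : e ∈ primeExponents m) : 0 < e := by
  obtain ⟨p, hp, rfl⟩ := List.mem_map.1 he
  rw [Nat.pos_iff_ne_zero, ← Finsupp.mem_support_iff, Nat.support_factorization]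
  exact (Finset.mem_sort _).1 hp

lemma prod_sortedPrimeFactors_pow {m : ℕ} (hm : m ≠ 0) :
    ((sortedPrimeFactors m).map fun p => p ^ m.factorization p).prod = m := by
  rw [sortedPrimeFactors, ← List.prod_toFinset _ (Finset.sort_nodup _ _), Finset.sort_toFinset,
    ← Nat.support_factorization]
  exact Nat.prod_factorization_pow_eq_self hm

lemma exists_composition_eventually_primeExponents_eq {n : ℕ} {F : Ultrafilter ℕ+}
    (h : levelSet n ∈ F) :
    ∃ c : Composition n, ∀ᶠ x : ℕ+ in F, primeExponents x = c.blocks := by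
  have hmem : Set.range (Composition.blocks (n := n)) ∈ F.map fun x => primeExponents x :=
    F.mem_of_superset h fun x hx => ⟨⟨primeExponents x, pos_of_mem_primeExponents,
      (sum_primeExponents x).trans (mem_levelSet_iff.1 hx)⟩, rfl⟩
  obtain ⟨_, ⟨c, rfl⟩, hc⟩ := Ultrafilter.eq_pure_of_finite_mem (Set.finite_range _) hmem
  exact ⟨c, Ultrafilter.mem_map.1 (hc ▸ rfl : {c.blocks} ∈ F.map fun x => primeExponents x)⟩

def primeFactorAt (m i : ℕ) : ℕ+ := ((sortedPrimeFactors m).getD i 0).toPNat'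

lemma coe_primeFactorAt {m i : ℕ} (hi : i < (sortedPrimeFactors m).length) :
    (primeFactorAt m i : ℕ) = (sortedPrimeFactors m)[i] := by
  rw [primeFactorAt, List.getD_eq_getElem _ _ hi,
    PNat.toPNat'_coe (prime_of_mem_sortedPrimeFactors (List.getElem_mem hi)).pos]

lemma primeFactorAt_mem_primes {m i : ℕ} (hi : i < (sortedPrimeFactors m).length) :
    primeFactorAt m i ∈ primes := by
  show (primeFactorAt m i : ℕ).Prime
  rw [coe_primeFactorAt hi]
  exact prime_of_mem_sortedPrimeFactors (List.getElem_mem hi)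

lemma primeFactorAt_injective {m r : ℕ} (hr : r = (sortedPrimeFactors m).length) :
    Function.Injective fun i : Fin r => primeFactorAt m i := by
  intro i j hij
  have := congrArg PNat.val hij
  rw [coe_primeFactorAt (hr ▸ i.2), coe_primeFactorAt (hr ▸ j.2)] at this
  exact Fin.ext ((Finset.sort_nodup _ _).getElem_inj_iff.1 this)

lemma eq_prod_primeFactorAt_pow {x : ℕ+} {es : List ℕ} (hx : primeExponents x = es) :
    x = ∏ i : Fin es.length, primeFactorAt x i ^ es[i] := by
  set l := sortedPrimeFactors x
  have hlen : es.length = l.length := by rw [← hx, primeExponents, List.length_map]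
  have hexp (i : Fin es.length) : es[i] = (x : ℕ).factorization l[i] := by
    subst hx
    exact List.getElem_map ..
  have hcoe (i : Fin es.length) : (primeFactorAt x i : ℕ) = l[i] :=
    coe_primeFactorAt (hlen ▸ i.2)
  refine PNat.coe_injective ?_
  rw [PNat.coe_finset_prod]
  simp_rw [PNat.pow_coe, hcoe, hexp]
  calc (x : ℕ) = (l.map fun p => p ^ (x : ℕ).factorization p).prod :=
        (prod_sortedPrimeFactors_pow x.ne_zero).symm
    _ = ∏ i : Fin l.length, l[i] ^ (x : ℕ).factorization l[i] :=
        (Fin.prod_univ_fun_getElem l _).symm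
    _ = _ := (Fintype.prod_equiv (finCongr hlen) _ _ fun _ => rfl).symm

theorem exists_pattern_of_levelSet_mem {n : ℕ} {F : Ultrafilter ℕ+} (h : levelSet n ∈ F) :
    ∃ α : Pat, IsPattern α ∧ sigmaPat α = n ∧ ∀ S ∈ FamF α, S ∈ F := by
  obtain ⟨c, hc⟩ := exists_composition_eventually_primeExponents_eq h
  have hq : ∀ᶠ x : ℕ+ in F,
      Function.Injective (fun i : Fin c.blocks.length => primeFactorAt x i) ∧
      (∀ i : Fin c.blocks.length, primeFactorAt x i ∈ primes) ∧
      x = ∏ i : Fin c.blocks.length, primeFactorAt x i ^ c.blocks[i] := by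
    filter_upwards [hc] with x hx
    have hlen : c.blocks.length = (sortedPrimeFactors x).length := by
      rw [← hx, primeExponents, List.length_map]
    exact ⟨primeFactorAt_injective hlen, fun i => primeFactorAt_mem_primes (hlen ▸ i.2),
      eq_prod_primeFactorAt_pow hx⟩
  obtain ⟨α, hα, hσ, hF⟩ :=
    exists_pattern_of_eventually_eq_prod (fun i => c.blocks_pos (List.getElem_mem _)) hq
  exact ⟨α, hα, hσ.trans ((Fin.sum_univ_getElem _).trans c.blocks_sum), hF⟩

theorem stmt6_general (n : ℕ) (F : Ultrafilter ℕ+) :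
    levelSet n ∈ F ↔
      ∃ α : Pat, IsPattern α ∧ sigmaPat α = n ∧ ∀ S ∈ FamF α, S ∈ F :=
  ⟨exists_pattern_of_levelSet_mem,
    fun ⟨_, hα, hσ, hF⟩ => hσ ▸ levelSet_mem_of_forall_famF_mem hα hF⟩

theorem stmt6 (n : ℕ) (hn : 1 ≤ n) (F : Ultrafilter ℕ+) :
    levelSet n ∈ F ↔
      ∃ α : Pat, IsPattern α ∧ sigmaPat α = n ∧ ∀ S ∈ FamF α, S ∈ F :=
  stmt6_general n F
end

section
/- If α and β are distinct patterns, then there exist sets X ∈ F_α and Y ∈ F_β with X ∩ Y = ∅. Consequently, no ultrafilter F on ℕ satisfies both F_α ⊆ F and F_β ⊆ F; every ultrafilter contains the family F_α for at most one pattern α. -/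
open scoped Classical

/-! Distinct ultrafilters contain disjoint sets, so one can choose pairwise disjoint sets of primes
`A P ∈ P`, one for each ultrafilter occurring in `α` or `β`. For `x` in the `α`-set built from `A`,
the number of primes of `A P` dividing `x` exactly to the power `k > 0` is `α (P, k)`, so `x`
determines `α`. Hence the `α`- and `β`-sets built from the same `A` are disjoint, and no ultrafilter
contains both. -/

theorem Ultrafilter.exists_pairwiseDisjoint_subset_mem {X : Type*} (T : Finset (Ultrafilter X))
    {s : Set X} (hs : ∀ P ∈ T, s ∈ P) :
    ∃ C : Ultrafilter X → Set X,
      (∀ P ∈ T, C P ∈ P ∧ C P ⊆ s) ∧ (T : Set (Ultrafilter X)).PairwiseDisjoint C := by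
  have hsep : ∀ P Q : Ultrafilter X, P ≠ Q → ∃ U ∈ P, ∃ V ∈ Q, Disjoint U V := fun P Q hPQ =>
    Filter.disjoint_iff.1 <| Ultrafilter.disjoint_iff_not_le.2 fun h =>
      hPQ (Ultrafilter.coe_le_coe.1 h)
  choose! U hU V hV hUV using hsep
  refine ⟨fun P => s ∩ ⋂ Q ∈ T.erase P, U P Q ∩ V Q P, fun P hP => ⟨?_, Set.inter_subset_left⟩, ?_⟩
  · refine Filter.inter_mem (hs P hP) ((Filter.biInter_finset_mem _).2 fun Q hQ => ?_)
    have hQP : Q ≠ P := Finset.ne_of_mem_erase hQ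
    exact Filter.inter_mem (hU P Q hQP.symm) (hV Q P hQP)
  · intro P hP Q hQ hPQ
    have hCP : s ∩ ⋂ R ∈ T.erase P, U P R ∩ V R P ⊆ U P Q := fun x hx =>
      (Set.mem_iInter₂.1 hx.2 Q (Finset.mem_erase.2 ⟨Ne.symm hPQ, hQ⟩)).1
    have hCQ : s ∩ ⋂ R ∈ T.erase Q, U Q R ∩ V R Q ⊆ V P Q := fun x hx =>
      (Set.mem_iInter₂.1 hx.2 P (Finset.mem_erase.2 ⟨hPQ, hP⟩)).2
    exact (hUV P Q hPQ).mono hCP hCQ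

section FactorizationOfProduct

variable {ι : Type*} {s : Finset ι} {e : ι → ℕ}

theorem Nat.factorization_prod_pow_of_prime (g : ι → ℕ) (he : ∀ i ∈ s, (e i).Prime) :
    (∏ i ∈ s, e i ^ g i).factorization = ∑ i ∈ s, Finsupp.single (e i) (g i) := by
  rw [Nat.factorization_prod fun i hi => pow_ne_zero _ (he i hi).ne_zero]
  exact Finset.sum_congr rfl fun i hi => (he i hi).factorization_pow

theorem Nat.factorization_prod_pow_apply_of_injOn (g : ι → ℕ) (he : ∀ i ∈ s, (e i).Prime)
    (hinj : Set.InjOn e s) {i : ι} (hi : i ∈ s) :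
    (∏ j ∈ s, e j ^ g j).factorization (e i) = g i := by
  classical
  rw [Nat.factorization_prod_pow_of_prime g he, Finsupp.finsetSum_apply,
    Finset.sum_eq_single_of_mem i hi fun j hj hji =>
      Finsupp.single_eq_of_ne' fun h => hji (hinj hj hi h)]
  exact Finsupp.single_eq_same

theorem Nat.exists_eq_of_factorization_prod_pow_ne_zero (g : ι → ℕ) (he : ∀ i ∈ s, (e i).Prime)
    {q : ℕ} (hq : (∏ i ∈ s, e i ^ g i).factorization q ≠ 0) : ∃ i ∈ s, e i = q := by
  rw [Nat.factorization_prod_pow_of_prime g he, Finsupp.finsetSum_apply] at hq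
  obtain ⟨i, hi, hne⟩ := Finset.exists_ne_zero_of_sum_ne_zero hq
  exact ⟨i, hi, by_contra fun h => hne (Finsupp.single_eq_of_ne' h)⟩

end FactorizationOfProduct

theorem coe_prod_patBase (α : Pat) (p : (Pk : Ultrafilter ℕ+ × ℕ) → Fin (α Pk) → ℕ+) :
    ((∏ Pk ∈ α.support, ∏ j : Fin (α Pk), p Pk j ^ Pk.2 : ℕ+) : ℕ) =
      ∏ i ∈ α.support.sigma fun Pk => (Finset.univ : Finset (Fin (α Pk))),
        (p i.1 i.2 : ℕ) ^ i.1.2 := by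
  rw [Finset.prod_sigma]
  push_cast
  rfl

theorem ncard_setOf_factorization_eq_of_mem_patBaseSet {α : Pat} {A : Ultrafilter ℕ+ → Set ℕ+}
    (hprime : ∀ Pk ∈ α.support, A Pk.1 ⊆ primes) {P : Ultrafilter ℕ+}
    (hdisj : ∀ Pk ∈ α.support, Pk.1 ≠ P → Disjoint (A Pk.1) (A P)) {k : ℕ} (hk : 0 < k)
    {x : ℕ+} (hx : x ∈ patBaseSet α A) :
    {q ∈ A P | (x : ℕ).factorization q = k}.ncard = α (P, k) := by
  obtain ⟨p, hpA, hpinj, rfl⟩ := hx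
  set I := α.support.sigma fun Pk => (Finset.univ : Finset (Fin (α Pk)))
  -- every index lies in `I`, since `Fin (α Pk)` is empty off the support
  have hI : ∀ i : Σ Pk : Ultrafilter ℕ+ × ℕ, Fin (α Pk), i ∈ I := fun i =>
    Finset.mem_sigma.2 ⟨Finsupp.mem_support_iff.2 (Fin.pos i.2).ne', Finset.mem_univ _⟩
  have hpprime : ∀ i ∈ I, (p i.1 i.2 : ℕ).Prime := fun i hi =>
    hprime i.1 (Finset.mem_sigma.1 hi).1 (hpA _ _)
  have hpinj' : Set.InjOn (fun i : Σ Pk : Ultrafilter ℕ+ × ℕ, Fin (α Pk) => (p i.1 i.2 : ℕ)) I :=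
    fun _ _ _ _ h => hpinj (PNat.coe_injective h)
  rw [coe_prod_patBase]
  suffices {q ∈ A P | (∏ i ∈ I, (p i.1 i.2 : ℕ) ^ i.1.2).factorization q = k} =
      Set.range (p (P, k)) by
    rw [this, Set.ncard_range_of_injective fun j j' h => by
      simpa using @hpinj ⟨(P, k), j⟩ ⟨(P, k), j'⟩ h, Nat.card_fin]
  ext q
  constructor
  · rintro ⟨hqA, hqk⟩
    obtain ⟨⟨⟨P', k'⟩, j⟩, hi, hpq⟩ :=
      Nat.exists_eq_of_factorization_prod_pow_ne_zero _ hpprime (hqk ▸ hk.ne' :)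
    have hk' : k' = k := by
      rw [← hqk, ← hpq, Nat.factorization_prod_pow_apply_of_injOn _ hpprime hpinj' hi]
    have hpq' : p (P', k') j = q := PNat.coe_injective hpq
    have hP' : P' = P := by
      by_contra hne
      exact Set.disjoint_left.1 (hdisj _ (Finset.mem_sigma.1 hi).1 hne) (hpA _ j) (hpq' ▸ hqA)
    subst hk' hP'
    exact ⟨j, hpq'⟩
  · rintro ⟨j, rfl⟩
    exact ⟨hpA _ j, Nat.factorization_prod_pow_apply_of_injOn _ hpprime hpinj' (hI ⟨(P, k), j⟩)⟩

theorem patBaseSet_mem_famF {α : Pat} {A : Ultrafilter ℕ+ → Set ℕ+}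
    (hA : ∀ Pk ∈ α.support, A Pk.1 ∈ Pk.1 ∧ A Pk.1 ⊆ primes)
    (hdisj : (α.support.image Prod.fst : Set (Ultrafilter ℕ+)).PairwiseDisjoint A) :
    patBaseSet α A ∈ FamF α :=
  ⟨A, hA, fun _ hPk _ hPk' hne => Set.disjoint_iff_inter_eq_empty.1 <|
    hdisj (Finset.mem_image_of_mem _ hPk) (Finset.mem_image_of_mem _ hPk') hne, rfl⟩

theorem disjoint_patBaseSet {α β : Pat} (hne : α ≠ β) {A : Ultrafilter ℕ+ → Set ℕ+}
    (hpos : ∀ Pk ∈ α.support ∪ β.support, 0 < Pk.2)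
    (hprime : ∀ Pk ∈ α.support ∪ β.support, A Pk.1 ⊆ primes)
    (hdisj : ((α.support ∪ β.support).image Prod.fst : Set (Ultrafilter ℕ+)).PairwiseDisjoint A) :
    Disjoint (patBaseSet α A) (patBaseSet β A) := by
  obtain ⟨Pk, hPk⟩ := DFunLike.ne_iff.1 hne
  have hmem : Pk ∈ α.support ∪ β.support := by
    simp only [Finset.mem_union, Finsupp.mem_support_iff]
    omega
  have hdisj' : ∀ Pk' ∈ α.support ∪ β.support, Pk'.1 ≠ Pk.1 → Disjoint (A Pk'.1) (A Pk.1) :=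
    fun Pk' hPk' => hdisj (Finset.mem_image_of_mem _ hPk') (Finset.mem_image_of_mem _ hmem)
  refine Set.disjoint_left.2 fun x hxα hxβ => hPk ?_
  rw [← ncard_setOf_factorization_eq_of_mem_patBaseSet
      (fun Pk' h => hprime Pk' (Finset.mem_union_left _ h))
      (fun Pk' h => hdisj' Pk' (Finset.mem_union_left _ h)) (hpos Pk hmem) hxα,
    ← ncard_setOf_factorization_eq_of_mem_patBaseSet
      (fun Pk' h => hprime Pk' (Finset.mem_union_right _ h))
      (fun Pk' h => hdisj' Pk' (Finset.mem_union_right _ h)) (hpos Pk hmem) hxβ]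

theorem stmt7 (α β : Pat) (hα : IsPattern α) (hβ : IsPattern β) (hne : α ≠ β) :
    (∃ X ∈ FamF α, ∃ Y ∈ FamF β, X ∩ Y = ∅) ∧
    ∀ F : Ultrafilter ℕ+, ¬ ((∀ S ∈ FamF α, S ∈ F) ∧ (∀ S ∈ FamF β, S ∈ F)) := by
  set S := α.support ∪ β.support
  have hS : ∀ Pk ∈ S, primes ∈ Pk.1 ∧ 0 < Pk.2 := fun Pk hPk =>
    (Finset.mem_union.1 hPk).elim (hα Pk) (hβ Pk)
  obtain ⟨A, hA, hdisj⟩ := Ultrafilter.exists_pairwiseDisjoint_subset_mem (S.image Prod.fst)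
    (s := primes) (by simpa using fun Pk hPk => (hS Pk hPk).1)
  have hAS : ∀ Pk ∈ S, A Pk.1 ∈ Pk.1 ∧ A Pk.1 ⊆ primes := fun Pk hPk =>
    hA _ (Finset.mem_image_of_mem _ hPk)
  have hmemF : ∀ γ : Pat, γ.support ⊆ S → patBaseSet γ A ∈ FamF γ := fun γ hγ =>
    patBaseSet_mem_famF (fun Pk hPk => hAS Pk (hγ hPk))
      (hdisj.subset (Finset.coe_subset.2 (Finset.image_subset_image hγ)))
  have hsep : ∃ X ∈ FamF α, ∃ Y ∈ FamF β, X ∩ Y = ∅ :=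
    ⟨_, hmemF α Finset.subset_union_left, _, hmemF β Finset.subset_union_right,
      Set.disjoint_iff_inter_eq_empty.1 <| disjoint_patBaseSet hne (fun Pk hPk => (hS Pk hPk).2)
        (fun Pk hPk => (hAS Pk hPk).2) hdisj⟩
  refine ⟨hsep, fun F ⟨hFα, hFβ⟩ => ?_⟩
  obtain ⟨X, hX, Y, hY, hXY⟩ := hsep
  exact F.empty_notMem (hXY ▸ Filter.inter_mem (hFα X hX) (hFβ Y hY))
end

section
/- Let α and β be patterns such that for every prime number p (identified with the principal ultrafilter at p) one has α(p,k) ∈ {0,1} for all k with α(p,k) = 1 for at most one k, and likewise for β. If F and G are ultrafilters on ℕ with F_α ⊆ F and F_β ⊆ G, then F_{α⊕β} ⊆ F·G, i.e. the pattern of F·G is α ⊕ β. -/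
open scoped Classical

/-- For a prime `p`, `exp_p α` is the unique `k` with `α(p,k) = 1` if it exists,
and `0` otherwise.  (For patterns taking only values `0,1` at principal ultrafilters
of primes, with at most one `k` where the value is `1`, this sum is exactly that.) -/
noncomputable def expP (α : Pat) (p : ℕ+) : ℕ :=
  ∑ Pk ∈ α.support.filter (fun Pk => Pk.1 = pure p), Pk.2 * α Pk

/-- `α(p,k) ∈ {0,1}` for all `k`, with `α(p,k) = 1` for at most one `k`,
for every prime `p`. -/
def PrimeSimple (α : Pat) : Prop :=
  ∀ p : ℕ+, (p : ℕ).Prime →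
    (∀ k : ℕ, α (pure p, k) ≤ 1) ∧
    ∀ k k' : ℕ, α (pure p, k) = 1 → α (pure p, k') = 1 → k = k'


namespace S8

lemma pure_inj {a b : ℕ+} (h : (pure a : Ultrafilter ℕ+) = pure b) : a = b := by
  have h1 : ({a} : Set ℕ+) ∈ (pure b : Ultrafilter ℕ+) := by
    rw [← h]; exact Ultrafilter.mem_pure.2 rfl
  exact (Set.mem_singleton_iff.1 (Ultrafilter.mem_pure.1 h1)).symm

noncomputable def qofU (P : Ultrafilter ℕ+) : ℕ+ :=
  if h : ∃ q : ℕ+, P = pure q then h.choose else 1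

lemma qofU_spec {P : Ultrafilter ℕ+} {q : ℕ+} (h : P = pure q) : qofU P = q := by
  rw [qofU, dif_pos ⟨q, h⟩]
  exact pure_inj ((⟨q, h⟩ : ∃ q' : ℕ+, P = pure q').choose_spec.symm.trans h)

lemma diff_mem {P : Ultrafilter ℕ+} (h : ∀ q : ℕ+, P ≠ pure q) {A : Set ℕ+} (hA : A ∈ P)
    {D : Set ℕ+} (hD : D.Finite) : A \ D ∈ P := by
  have hDc : Dᶜ ∈ P := by
    rw [Ultrafilter.compl_mem_iff_notMem]
    intro hmem
    obtain ⟨x, -, hx⟩ := Ultrafilter.eq_pure_of_finite_mem hD hmem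
    exact h x hx
  have := Filter.inter_mem hA hDc
  rwa [← Set.diff_eq] at this

lemma supp_exp {α : Pat} (hs : PrimeSimple α) {p : ℕ+} (hp : (p : ℕ).Prime) {k : ℕ}
    (h : α (pure p, k) ≠ 0) : α (pure p, k) = 1 ∧ expP α p = k := by
  have hk1 : α (pure p, k) = 1 := le_antisymm ((hs p hp).1 k) (Nat.one_le_iff_ne_zero.2 h)
  refine ⟨hk1, ?_⟩
  have hfil : α.support.filter (fun Pk => Pk.1 = pure p)
      = {((pure p : Ultrafilter ℕ+), k)} := by
    ext Pk
    simp only [Finset.mem_filter, Finsupp.mem_support_iff, Finset.mem_singleton]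
    constructor
    · rintro ⟨hne, h1⟩
      obtain ⟨P, k'⟩ := Pk
      simp only at h1
      subst h1
      have h2 : α (pure p, k') = 1 :=
        le_antisymm ((hs p hp).1 k') (Nat.one_le_iff_ne_zero.2 hne)
      rw [(hs p hp).2 k' k h2 hk1]
    · rintro rfl
      exact ⟨h, rfl⟩
  rw [expP, hfil, Finset.sum_singleton, hk1, mul_one]

lemma exp_mem {α : Pat} {p : ℕ+} (h : expP α p ≠ 0) :
    ∃ k, ((pure p : Ultrafilter ℕ+), k) ∈ α.support := by
  by_contra hc
  push_neg at hc
  apply h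
  rw [expP]
  apply Finset.sum_eq_zero
  intro Pk hPk
  rw [Finset.mem_filter] at hPk
  have hPkeq : Pk = ((pure p : Ultrafilter ℕ+), Pk.2) := Prod.ext hPk.2 rfl
  exact absurd (hPkeq ▸ hPk.1) (hc Pk.2)

lemma exp_supp {α : Pat} (hα : IsPattern α) (hs : PrimeSimple α) {p : ℕ+}
    (h : expP α p ≠ 0) :
    ((pure p : Ultrafilter ℕ+), expP α p) ∈ α.support ∧ (p : ℕ).Prime := by
  obtain ⟨k, hk⟩ := exp_mem h
  have hp : (p : ℕ).Prime := Ultrafilter.mem_pure.1 (hα _ hk).1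
  have := supp_exp hs hp (Finsupp.mem_support_iff.1 hk)
  refine ⟨?_, hp⟩
  rw [this.2]
  exact hk

lemma prod_fin_split {M : Type*} [CommMonoid M] {n a b : ℕ} (h : n = a + b) (g : Fin n → M) :
    ∏ j, g j = (∏ j : Fin a, g (Fin.cast h.symm (Fin.castAdd b j)))
      * ∏ j : Fin b, g (Fin.cast h.symm (Fin.natAdd a j)) := by
  subst h
  rw [Fin.prod_univ_add]
  rfl

lemma patBaseSet_mono {γ : Pat} {A B : Ultrafilter ℕ+ → Set ℕ+} (h : ∀ P, A P ⊆ B P) :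
    patBaseSet γ A ⊆ patBaseSet γ B := by
  rintro x ⟨p, h1, h2, h3⟩
  exact ⟨p, fun Pk j => h _ (h1 Pk j), h2, h3⟩

/-- The modified choice function: on principal ultrafilters cut down to the point,
elsewhere remove the set `D`. -/
noncomputable def modA (A : Ultrafilter ℕ+ → Set ℕ+) (D : Set ℕ+) (P : Ultrafilter ℕ+) :
    Set ℕ+ :=
  if ∃ q : ℕ+, P = pure q then A P ∩ {qofU P} else A P \ D

lemma modA_sub (A : Ultrafilter ℕ+ → Set ℕ+) (D : Set ℕ+) (P : Ultrafilter ℕ+) :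
    modA A D P ⊆ A P := by
  rw [modA]
  split
  · exact Set.inter_subset_left
  · exact Set.diff_subset

lemma modA_pure (A : Ultrafilter ℕ+ → Set ℕ+) (D : Set ℕ+) {P : Ultrafilter ℕ+} {q : ℕ+}
    (h : P = pure q) : modA A D P = A P ∩ {q} := by
  rw [modA, if_pos ⟨q, h⟩, qofU_spec h]

lemma modA_np (A : Ultrafilter ℕ+ → Set ℕ+) (D : Set ℕ+) {P : Ultrafilter ℕ+}
    (h : ¬ ∃ q : ℕ+, P = pure q) : modA A D P = A P \ D := by
  rw [modA, if_neg h]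

lemma mk_fam (δ : Pat) (γ : Pat) (A : Ultrafilter ℕ+ → Set ℕ+)
    (hA1 : ∀ Pk ∈ γ.support, A Pk.1 ∈ Pk.1 ∧ A Pk.1 ⊆ primes)
    (hA2 : ∀ Pk ∈ γ.support, ∀ Pk' ∈ γ.support, Pk.1 ≠ Pk'.1 → A Pk.1 ∩ A Pk'.1 = ∅)
    (lift : ∀ Pk ∈ δ.support, ∃ k', (Pk.1, k') ∈ γ.support)
    (D : Set ℕ+) (hD : D.Finite) :
    patBaseSet δ (modA A D) ∈ FamF δ := by
  refine ⟨modA A D, ?_, ?_, rfl⟩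
  · intro Pk hPk
    obtain ⟨k', hk'⟩ := lift Pk hPk
    have h1 := hA1 _ hk'
    simp only at h1
    by_cases h : ∃ q : ℕ+, Pk.1 = pure q
    · obtain ⟨q, hq⟩ := h
      rw [modA_pure A D hq]
      rw [hq] at h1 ⊢
      constructor
      · exact Ultrafilter.mem_pure.2 ⟨Ultrafilter.mem_pure.1 h1.1, rfl⟩
      · exact fun x hx => h1.2 hx.1
    · rw [modA_np A D h]
      exact ⟨diff_mem (not_exists.mp h) h1.1 hD, fun x hx => h1.2 hx.1⟩
  · intro Pk hPk Pk' hPk' hne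
    obtain ⟨k1, h1⟩ := lift Pk hPk
    obtain ⟨k2, h2⟩ := lift Pk' hPk'
    have hd := hA2 _ h1 _ h2 hne
    apply Set.eq_empty_iff_forall_notMem.2
    intro x hx
    have : x ∈ A Pk.1 ∩ A Pk'.1 := ⟨modA_sub A D Pk.1 hx.1, modA_sub A D Pk'.1 hx.2⟩
    rw [hd] at this
    exact this

/-- Combine the two prime choice functions. -/
noncomputable def combine (α β γ : Pat)
    (hγ1 : ∀ Pk : (Ultrafilter ℕ+) × ℕ, (∀ m : ℕ+, Pk.1 ≠ pure m) → γ Pk = α Pk + β Pk)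
    (pm : (Pk : (Ultrafilter ℕ+) × ℕ) → Fin (α Pk) → ℕ+)
    (pn : (Pk : (Ultrafilter ℕ+) × ℕ) → Fin (β Pk) → ℕ+)
    (Pk : (Ultrafilter ℕ+) × ℕ) (j : Fin (γ Pk)) : ℕ+ :=
  if h : ∃ q : ℕ+, Pk.1 = pure q then qofU Pk.1
  else if hj : (j : ℕ) < α Pk then pm Pk ⟨j, hj⟩
  else pn Pk ⟨(j : ℕ) - α Pk, by
    have h2 := j.2
    have h3 := hγ1 Pk (not_exists.mp h)
    omega⟩

lemma combine_pure {α β γ : Pat} {hγ1} {pm} {pn} {Pk : (Ultrafilter ℕ+) × ℕ}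
    (j : Fin (γ Pk)) {q : ℕ+} (hq : Pk.1 = pure q) :
    combine α β γ hγ1 pm pn Pk j = q := by
  rw [combine, dif_pos ⟨q, hq⟩, qofU_spec hq]

lemma combine_lt {α β γ : Pat} {hγ1} {pm} {pn} {Pk : (Ultrafilter ℕ+) × ℕ}
    (j : Fin (γ Pk)) (hnp : ¬ ∃ q : ℕ+, Pk.1 = pure q) (hj : (j : ℕ) < α Pk) :
    combine α β γ hγ1 pm pn Pk j = pm Pk ⟨(j : ℕ), hj⟩ := by
  rw [combine, dif_neg hnp, dif_pos hj]

lemma combine_ge {α β γ : Pat} {hγ1} {pm} {pn} {Pk : (Ultrafilter ℕ+) × ℕ}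
    (j : Fin (γ Pk)) (hnp : ¬ ∃ q : ℕ+, Pk.1 = pure q) (j' : Fin (β Pk))
    (hj : (j : ℕ) = α Pk + (j' : ℕ)) :
    combine α β γ hγ1 pm pn Pk j = pn Pk j' := by
  rw [combine, dif_neg hnp, dif_neg (by omega)]
  congr 1
  exact Fin.ext (by simp; omega)

end S8

theorem stmt8 (α β γ : Pat) (hα : IsPattern α) (hβ : IsPattern β) (hγ : IsPattern γ)
    (hαs : PrimeSimple α) (hβs : PrimeSimple β)
    -- `γ = α ⊕ β` : on nonprincipal ultrafilters the values add,
    (hγ1 : ∀ Pk : (Ultrafilter ℕ+) × ℕ, (∀ m : ℕ+, Pk.1 ≠ pure m) →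
      γ Pk = α Pk + β Pk)
    -- and at a prime `p` the exponents add:
    -- `γ(p,k) = 1` iff `k = exp_p α + exp_p β > 0`, and `γ(p,k) = 0` otherwise.
    (hγ2 : ∀ p : ℕ+, (p : ℕ).Prime → ∀ k : ℕ,
      γ (pure p, k) = if k = expP α p + expP β p ∧ 0 < k then 1 else 0)
    (F G : Ultrafilter ℕ+) (hF : ∀ S ∈ FamF α, S ∈ F) (hG : ∀ S ∈ FamF β, S ∈ G) :
    ∀ S ∈ FamF γ, S ∈ umul F G := by
  intro S hS
  obtain ⟨A, hA1, hA2, rfl⟩ := hS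
  classical
  have hprimeγ : ∀ (q : ℕ+) (k : ℕ), ((pure q : Ultrafilter ℕ+), k) ∈ γ.support →
      (q : ℕ).Prime := fun q k h => Ultrafilter.mem_pure.1 (hγ _ h).1
  have hprimeα : ∀ (q : ℕ+) (k : ℕ), ((pure q : Ultrafilter ℕ+), k) ∈ α.support →
      (q : ℕ).Prime := fun q k h => Ultrafilter.mem_pure.1 (hα _ h).1
  have hprimeβ : ∀ (q : ℕ+) (k : ℕ), ((pure q : Ultrafilter ℕ+), k) ∈ β.support →
      (q : ℕ).Prime := fun q k h => Ultrafilter.mem_pure.1 (hβ _ h).1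
  have hgp : ∀ (q : ℕ+) (k : ℕ), ((pure q : Ultrafilter ℕ+), k) ∈ γ.support →
      k = expP α q + expP β q ∧ γ ((pure q : Ultrafilter ℕ+), k) = 1 ∧ q ∈ A (pure q) := by
    intro q k hk
    have hq := hprimeγ q k hk
    have hne := Finsupp.mem_support_iff.1 hk
    have hcond : k = expP α q + expP β q ∧ 0 < k := by
      by_contra hc
      rw [hγ2 q hq k, if_neg hc] at hne
      exact hne rfl
    exact ⟨hcond.1, by rw [hγ2 q hq k, if_pos hcond],
      Ultrafilter.mem_pure.1 (hA1 _ hk).1⟩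
  have hge : ∀ q : ℕ+, (q : ℕ).Prime → 0 < expP α q + expP β q →
      ((pure q : Ultrafilter ℕ+), expP α q + expP β q) ∈ γ.support := by
    intro q hq h
    rw [Finsupp.mem_support_iff, hγ2 q hq, if_pos ⟨rfl, h⟩]
    exact one_ne_zero
  have liftα : ∀ Pk ∈ α.support, ∃ k', (Pk.1, k') ∈ γ.support := by
    intro Pk hPk
    by_cases h : ∃ q : ℕ+, Pk.1 = pure q
    · obtain ⟨q, hq⟩ := h
      have hPk' : ((pure q : Ultrafilter ℕ+), Pk.2) ∈ α.support := by
        rw [← (Prod.ext hq rfl : Pk = ((pure q : Ultrafilter ℕ+), Pk.2))]; exact hPk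
      have hq' := hprimeα q Pk.2 hPk'
      have he := (S8.supp_exp hαs hq' (Finsupp.mem_support_iff.1 hPk')).2
      have hpos : 0 < expP α q + expP β q := by
        have := (hα _ hPk).2; omega
      refine ⟨expP α q + expP β q, ?_⟩
      rw [hq]
      exact hge q hq' hpos
    · refine ⟨Pk.2, ?_⟩
      rw [Prod.mk.eta, Finsupp.mem_support_iff, hγ1 Pk (not_exists.mp h)]
      have := Finsupp.mem_support_iff.1 hPk
      omega
  have liftβ : ∀ Pk ∈ β.support, ∃ k', (Pk.1, k') ∈ γ.support := by
    intro Pk hPk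
    by_cases h : ∃ q : ℕ+, Pk.1 = pure q
    · obtain ⟨q, hq⟩ := h
      have hPk' : ((pure q : Ultrafilter ℕ+), Pk.2) ∈ β.support := by
        rw [← (Prod.ext hq rfl : Pk = ((pure q : Ultrafilter ℕ+), Pk.2))]; exact hPk
      have hq' := hprimeβ q Pk.2 hPk'
      have he := (S8.supp_exp hβs hq' (Finsupp.mem_support_iff.1 hPk')).2
      have hpos : 0 < expP α q + expP β q := by
        have := (hβ _ hPk).2; omega
      refine ⟨expP α q + expP β q, ?_⟩
      rw [hq]
      exact hge q hq' hpos
    · refine ⟨Pk.2, ?_⟩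
      rw [Prod.mk.eta, Finsupp.mem_support_iff, hγ1 Pk (not_exists.mp h)]
      have := Finsupp.mem_support_iff.1 hPk
      omega
  set pp : Finset ℕ+ := γ.support.image (fun Pk => S8.qofU Pk.1) with hppdef
  have hppmem : ∀ Pk ∈ γ.support, ∀ q : ℕ+, Pk.1 = pure q → q ∈ pp := by
    intro Pk hPk q hq
    exact Finset.mem_image.2 ⟨Pk, hPk, S8.qofU_spec hq⟩
  have hmemF : patBaseSet α (S8.modA A ↑pp) ∈ F :=
    hF _ (S8.mk_fam α γ A hA1 hA2 liftα ↑pp pp.finite_toSet)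
  have hiff : patBaseSet γ A ∈ umul F G ↔
      {m | {n | m * n ∈ patBaseSet γ A} ∈ G} ∈ F := by
    rw [umul, Ultrafilter.bind]
    simp [Ultrafilter.mem_map]
    rfl
  rw [hiff]
  refine Filter.mem_of_superset hmemF ?_
  intro m hm
  obtain ⟨pvm, hpm1, hpm2, rfl⟩ := hm
  simp only [Set.mem_setOf_eq]
  set Dm : Finset ℕ+ := α.support.biUnion
    (fun Pk => Finset.image (pvm Pk) Finset.univ) with hDmdef
  have hDm : ∀ Pk (j : Fin (α Pk)), pvm Pk j ∈ Dm := by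
    intro Pk j
    refine Finset.mem_biUnion.2 ⟨Pk, Finsupp.mem_support_iff.2 ?_,
      Finset.mem_image.2 ⟨j, Finset.mem_univ _, rfl⟩⟩
    have := j.2; omega
  have hmemG : patBaseSet β (S8.modA A (↑pp ∪ ↑Dm)) ∈ G :=
    hG _ (S8.mk_fam β γ A hA1 hA2 liftβ _ (pp.finite_toSet.union Dm.finite_toSet))
  refine Filter.mem_of_superset hmemG ?_
  intro n hn
  obtain ⟨pvn, hpn1, hpn2, rfl⟩ := hn
  simp only [Set.mem_setOf_eq]
  apply S8.patBaseSet_mono (fun P => S8.modA_sub A ↑pp P)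
  refine ⟨S8.combine α β γ hγ1 pvm pvn, ?_, ?_, ?_⟩
  · intro Pk j
    by_cases h : ∃ q : ℕ+, Pk.1 = pure q
    · obtain ⟨q, hq⟩ := h
      rw [S8.combine_pure j hq, S8.modA_pure A _ hq]
      have hPks : Pk ∈ γ.support := Finsupp.mem_support_iff.2 (by have := j.2; omega)
      have hPk' : ((pure q : Ultrafilter ℕ+), Pk.2) ∈ γ.support := by
        rw [← (Prod.ext hq rfl : Pk = ((pure q : Ultrafilter ℕ+), Pk.2))]; exact hPks
      have hqA := (hgp q Pk.2 hPk').2.2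
      rw [hq]
      exact ⟨hqA, rfl⟩
    · by_cases hj : (j : ℕ) < α Pk
      · rw [S8.combine_lt j h hj]
        exact hpm1 Pk ⟨j, hj⟩
      · have hsum := hγ1 Pk (not_exists.mp h)
        have hj2 := j.2
        rw [S8.combine_ge j h ⟨(j : ℕ) - α Pk, by omega⟩ (by simp; omega)]
        have hmem := hpn1 Pk ⟨(j : ℕ) - α Pk, by omega⟩
        rw [S8.modA_np A _ h] at hmem
        rw [S8.modA_np A _ h]
        exact ⟨hmem.1, fun hc => hmem.2 (Set.mem_union_left _ hc)⟩
  · rintro ⟨Pk, j⟩ ⟨Pk', j'⟩ hEq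
    change S8.combine α β γ hγ1 pvm pvn Pk j
      = S8.combine α β γ hγ1 pvm pvn Pk' j' at hEq
    have hPks : Pk ∈ γ.support := Finsupp.mem_support_iff.2 (by have := j.2; omega)
    have hPks' : Pk' ∈ γ.support := Finsupp.mem_support_iff.2 (by have := j'.2; omega)
    by_cases h : ∃ q : ℕ+, Pk.1 = pure q
    · obtain ⟨q, hq⟩ := h
      rw [S8.combine_pure j hq] at hEq
      by_cases h' : ∃ q' : ℕ+, Pk'.1 = pure q'
      · obtain ⟨q', hq'⟩ := h'
        rw [S8.combine_pure j' hq'] at hEq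
        subst hEq
        have hsup1 : ((pure q : Ultrafilter ℕ+), Pk.2) ∈ γ.support := by
          rw [← (Prod.ext hq rfl : Pk = ((pure q : Ultrafilter ℕ+), Pk.2))]; exact hPks
        have hsup2 : ((pure q : Ultrafilter ℕ+), Pk'.2) ∈ γ.support := by
          rw [← (Prod.ext hq' rfl : Pk' = ((pure q : Ultrafilter ℕ+), Pk'.2))]; exact hPks'
        have e1 := (hgp q Pk.2 hsup1).1
        have e2 := (hgp q Pk'.2 hsup2).1
        have hPkEq : Pk = Pk' := Prod.ext (hq.trans hq'.symm) (e1.trans e2.symm)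
        subst hPkEq
        have hone : γ Pk = 1 := by
          rw [(Prod.ext hq rfl : Pk = ((pure q : Ultrafilter ℕ+), Pk.2))]
          exact (hgp q Pk.2 hsup1).2.1
        have hjj : (j : ℕ) = (j' : ℕ) := by have := j.2; have := j'.2; omega
        exact congrArg (Sigma.mk Pk) (Fin.ext hjj)
      · exfalso
        have hqpp : q ∈ pp := hppmem Pk hPks q hq
        by_cases hj' : (j' : ℕ) < α Pk'
        · rw [S8.combine_lt j' h' hj'] at hEq
          have hmem := hpm1 Pk' ⟨j', hj'⟩
          rw [S8.modA_np A _ h'] at hmem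
          rw [← hEq] at hmem
          exact hmem.2 (Finset.mem_coe.2 hqpp)
        · have hsum := hγ1 Pk' (not_exists.mp h')
          have hj2 := j'.2
          rw [S8.combine_ge j' h' ⟨(j' : ℕ) - α Pk', by omega⟩ (by simp; omega)] at hEq
          have hmem := hpn1 Pk' ⟨(j' : ℕ) - α Pk', by omega⟩
          rw [S8.modA_np A _ h'] at hmem
          rw [← hEq] at hmem
          exact hmem.2 (Set.mem_union_left _ (Finset.mem_coe.2 hqpp))
    · by_cases h' : ∃ q' : ℕ+, Pk'.1 = pure q'
      · exfalso
        obtain ⟨q', hq'⟩ := h'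
        rw [S8.combine_pure j' hq'] at hEq
        have hqpp : q' ∈ pp := hppmem Pk' hPks' q' hq'
        by_cases hj : (j : ℕ) < α Pk
        · rw [S8.combine_lt j h hj] at hEq
          have hmem := hpm1 Pk ⟨j, hj⟩
          rw [S8.modA_np A _ h] at hmem
          rw [hEq] at hmem
          exact hmem.2 (Finset.mem_coe.2 hqpp)
        · have hsum := hγ1 Pk (not_exists.mp h)
          have hj2 := j.2
          rw [S8.combine_ge j h ⟨(j : ℕ) - α Pk, by omega⟩ (by simp; omega)] at hEq
          have hmem := hpn1 Pk ⟨(j : ℕ) - α Pk, by omega⟩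
          rw [S8.modA_np A _ h] at hmem
          rw [hEq] at hmem
          exact hmem.2 (Set.mem_union_left _ (Finset.mem_coe.2 hqpp))
      · have hsum := hγ1 Pk (not_exists.mp h)
        have hsum' := hγ1 Pk' (not_exists.mp h')
        have hj2 := j.2
        have hj2' := j'.2
        by_cases hj : (j : ℕ) < α Pk
        · rw [S8.combine_lt j h hj] at hEq
          by_cases hj' : (j' : ℕ) < α Pk'
          · rw [S8.combine_lt j' h' hj'] at hEq
            have hsig := hpm2 (a₁ := ⟨Pk, ⟨(j : ℕ), hj⟩⟩) (a₂ := ⟨Pk', ⟨(j' : ℕ), hj'⟩⟩) hEq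
            obtain ⟨hfst, hsnd⟩ := Sigma.mk.inj_iff.1 hsig
            subst hfst
            have hval : (j : ℕ) = (j' : ℕ) := by
              have := congrArg Fin.val (eq_of_heq hsnd)
              simpa using this
            exact congrArg (Sigma.mk Pk) (Fin.ext hval)
          · exfalso
            rw [S8.combine_ge j' h' ⟨(j' : ℕ) - α Pk', by omega⟩ (by simp; omega)] at hEq
            have hmem := hpn1 Pk' ⟨(j' : ℕ) - α Pk', by omega⟩
            rw [S8.modA_np A _ h'] at hmem
            rw [← hEq] at hmem
            exact hmem.2 (Set.mem_union_right _ (Finset.mem_coe.2 (hDm Pk ⟨(j : ℕ), hj⟩)))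
        · rw [S8.combine_ge j h ⟨(j : ℕ) - α Pk, by omega⟩ (by simp; omega)] at hEq
          by_cases hj' : (j' : ℕ) < α Pk'
          · exfalso
            rw [S8.combine_lt j' h' hj'] at hEq
            have hmem := hpn1 Pk ⟨(j : ℕ) - α Pk, by omega⟩
            rw [S8.modA_np A _ h] at hmem
            rw [hEq] at hmem
            exact hmem.2 (Set.mem_union_right _ (Finset.mem_coe.2 (hDm Pk' ⟨(j' : ℕ), hj'⟩)))
          · rw [S8.combine_ge j' h' ⟨(j' : ℕ) - α Pk', by omega⟩ (by simp; omega)] at hEq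
            have hsig := hpn2 (a₁ := ⟨Pk, ⟨(j : ℕ) - α Pk, by omega⟩⟩)
              (a₂ := ⟨Pk', ⟨(j' : ℕ) - α Pk', by omega⟩⟩) hEq
            obtain ⟨hfst, hsnd⟩ := Sigma.mk.inj_iff.1 hsig
            subst hfst
            have hval : (j : ℕ) - α Pk = (j' : ℕ) - α Pk := by
              have := congrArg Fin.val (eq_of_heq hsnd)
              simpa using this
            have hvv : (j : ℕ) = (j' : ℕ) := by omega
            exact congrArg (Sigma.mk Pk) (Fin.ext hvv)
  · have keyNP : ∀ Pk ∈ γ.support.filter (fun Pk => ¬ ∃ q : ℕ+, Pk.1 = pure q),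
        (∏ jj : Fin (γ Pk), (S8.combine α β γ hγ1 pvm pvn Pk jj) ^ Pk.2)
          = (∏ jj : Fin (α Pk), pvm Pk jj ^ Pk.2)
            * (∏ jj : Fin (β Pk), pvn Pk jj ^ Pk.2) := by
      intro Pk hPk
      have hnp : ¬ ∃ q : ℕ+, Pk.1 = pure q := (Finset.mem_filter.1 hPk).2
      have hsum := hγ1 Pk (not_exists.mp hnp)
      rw [S8.prod_fin_split hsum
        (fun jj => (S8.combine α β γ hγ1 pvm pvn Pk jj) ^ Pk.2)]
      congr 1
      · refine Finset.prod_congr rfl fun jj _ => ?_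
        have hlt : ((Fin.cast hsum.symm (Fin.castAdd (β Pk) jj) : Fin (γ Pk)) : ℕ) < α Pk := by
          simp
        rw [S8.combine_lt _ hnp hlt]
        congr 1
      · refine Finset.prod_congr rfl fun jj _ => ?_
        congr 1
        exact S8.combine_ge _ hnp jj (by simp)
    have hNPα : ∏ Pk ∈ α.support.filter (fun Pk => ¬ ∃ q : ℕ+, Pk.1 = pure q),
          (∏ jj : Fin (α Pk), pvm Pk jj ^ Pk.2)
        = ∏ Pk ∈ γ.support.filter (fun Pk => ¬ ∃ q : ℕ+, Pk.1 = pure q),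
          (∏ jj : Fin (α Pk), pvm Pk jj ^ Pk.2) := by
      apply Finset.prod_subset
      · intro Pk hPk
        rw [Finset.mem_filter] at hPk ⊢
        refine ⟨?_, hPk.2⟩
        rw [Finsupp.mem_support_iff, hγ1 Pk (not_exists.mp hPk.2)]
        have := Finsupp.mem_support_iff.1 hPk.1
        omega
      · intro Pk hPk hPk2
        have h0 : α Pk = 0 := by
          by_contra hc
          exact hPk2 (Finset.mem_filter.2
            ⟨Finsupp.mem_support_iff.2 hc, (Finset.mem_filter.1 hPk).2⟩)
        exact Finset.prod_eq_one fun jj _ => absurd jj.2 (by omega)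
    have hNPβ : ∏ Pk ∈ β.support.filter (fun Pk => ¬ ∃ q : ℕ+, Pk.1 = pure q),
          (∏ jj : Fin (β Pk), pvn Pk jj ^ Pk.2)
        = ∏ Pk ∈ γ.support.filter (fun Pk => ¬ ∃ q : ℕ+, Pk.1 = pure q),
          (∏ jj : Fin (β Pk), pvn Pk jj ^ Pk.2) := by
      apply Finset.prod_subset
      · intro Pk hPk
        rw [Finset.mem_filter] at hPk ⊢
        refine ⟨?_, hPk.2⟩
        rw [Finsupp.mem_support_iff, hγ1 Pk (not_exists.mp hPk.2)]
        have := Finsupp.mem_support_iff.1 hPk.1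
        omega
      · intro Pk hPk hPk2
        have h0 : β Pk = 0 := by
          by_contra hc
          exact hPk2 (Finset.mem_filter.2
            ⟨Finsupp.mem_support_iff.2 hc, (Finset.mem_filter.1 hPk).2⟩)
        exact Finset.prod_eq_one fun jj _ => absurd jj.2 (by omega)
    have hinjγ : ∀ Pk ∈ γ.support.filter (fun Pk => ∃ q : ℕ+, Pk.1 = pure q),
        ∀ Pk' ∈ γ.support.filter (fun Pk => ∃ q : ℕ+, Pk.1 = pure q),
        S8.qofU Pk.1 = S8.qofU Pk'.1 → Pk = Pk' := by
      intro Pk hPk Pk' hPk' hqq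
      obtain ⟨hs, q, hq⟩ := Finset.mem_filter.1 hPk
      obtain ⟨hs', q', hq'⟩ := Finset.mem_filter.1 hPk'
      rw [S8.qofU_spec hq, S8.qofU_spec hq'] at hqq
      subst hqq
      have hsup1 : ((pure q : Ultrafilter ℕ+), Pk.2) ∈ γ.support := by
        rw [← (Prod.ext hq rfl : Pk = ((pure q : Ultrafilter ℕ+), Pk.2))]; exact hs
      have hsup2 : ((pure q : Ultrafilter ℕ+), Pk'.2) ∈ γ.support := by
        rw [← (Prod.ext hq' rfl : Pk' = ((pure q : Ultrafilter ℕ+), Pk'.2))]; exact hs'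
      exact Prod.ext (hq.trans hq'.symm)
        ((hgp q Pk.2 hsup1).1.trans (hgp q Pk'.2 hsup2).1.symm)
    have hPγ : ∏ Pk ∈ γ.support.filter (fun Pk => ∃ q : ℕ+, Pk.1 = pure q),
          (∏ jj : Fin (γ Pk), (S8.combine α β γ hγ1 pvm pvn Pk jj) ^ Pk.2)
        = ∏ q ∈ (γ.support.filter (fun Pk => ∃ q : ℕ+, Pk.1 = pure q)).image
            (fun Pk => S8.qofU Pk.1), q ^ (expP α q + expP β q) := by
      rw [Finset.prod_image hinjγ]
      refine Finset.prod_congr rfl fun Pk hPk => ?_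
      obtain ⟨hs, q, hq⟩ := Finset.mem_filter.1 hPk
      rw [S8.qofU_spec hq]
      have hsup : ((pure q : Ultrafilter ℕ+), Pk.2) ∈ γ.support := by
        rw [← (Prod.ext hq rfl : Pk = ((pure q : Ultrafilter ℕ+), Pk.2))]; exact hs
      have hgp' := hgp q Pk.2 hsup
      have hone : γ Pk = 1 := by
        rw [(Prod.ext hq rfl : Pk = ((pure q : Ultrafilter ℕ+), Pk.2))]
        exact hgp'.2.1
      calc (∏ jj : Fin (γ Pk), (S8.combine α β γ hγ1 pvm pvn Pk jj) ^ Pk.2)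
          = ∏ _jj : Fin (γ Pk), q ^ Pk.2 :=
            Finset.prod_congr rfl fun jj _ => by rw [S8.combine_pure jj hq]
        _ = (q ^ Pk.2) ^ (γ Pk) := by
            rw [Finset.prod_const, Finset.card_univ, Fintype.card_fin]
        _ = q ^ (expP α q + expP β q) := by rw [hone, pow_one, hgp'.1]
    have hinjα : ∀ Pk ∈ α.support.filter (fun Pk => ∃ q : ℕ+, Pk.1 = pure q),
        ∀ Pk' ∈ α.support.filter (fun Pk => ∃ q : ℕ+, Pk.1 = pure q),
        S8.qofU Pk.1 = S8.qofU Pk'.1 → Pk = Pk' := by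
      intro Pk hPk Pk' hPk' hqq
      obtain ⟨hs, q, hq⟩ := Finset.mem_filter.1 hPk
      obtain ⟨hs', q', hq'⟩ := Finset.mem_filter.1 hPk'
      rw [S8.qofU_spec hq, S8.qofU_spec hq'] at hqq
      subst hqq
      have hsup1 : ((pure q : Ultrafilter ℕ+), Pk.2) ∈ α.support := by
        rw [← (Prod.ext hq rfl : Pk = ((pure q : Ultrafilter ℕ+), Pk.2))]; exact hs
      have hsup2 : ((pure q : Ultrafilter ℕ+), Pk'.2) ∈ α.support := by
        rw [← (Prod.ext hq' rfl : Pk' = ((pure q : Ultrafilter ℕ+), Pk'.2))]; exact hs'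
      have e1 := (S8.supp_exp hαs (hprimeα q Pk.2 hsup1)
        (Finsupp.mem_support_iff.1 hsup1)).2
      have e2 := (S8.supp_exp hαs (hprimeα q Pk'.2 hsup2)
        (Finsupp.mem_support_iff.1 hsup2)).2
      exact Prod.ext (hq.trans hq'.symm) (e1.symm.trans e2)
    have hinjβ : ∀ Pk ∈ β.support.filter (fun Pk => ∃ q : ℕ+, Pk.1 = pure q),
        ∀ Pk' ∈ β.support.filter (fun Pk => ∃ q : ℕ+, Pk.1 = pure q),
        S8.qofU Pk.1 = S8.qofU Pk'.1 → Pk = Pk' := by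
      intro Pk hPk Pk' hPk' hqq
      obtain ⟨hs, q, hq⟩ := Finset.mem_filter.1 hPk
      obtain ⟨hs', q', hq'⟩ := Finset.mem_filter.1 hPk'
      rw [S8.qofU_spec hq, S8.qofU_spec hq'] at hqq
      subst hqq
      have hsup1 : ((pure q : Ultrafilter ℕ+), Pk.2) ∈ β.support := by
        rw [← (Prod.ext hq rfl : Pk = ((pure q : Ultrafilter ℕ+), Pk.2))]; exact hs
      have hsup2 : ((pure q : Ultrafilter ℕ+), Pk'.2) ∈ β.support := by
        rw [← (Prod.ext hq' rfl : Pk' = ((pure q : Ultrafilter ℕ+), Pk'.2))]; exact hs'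
      have e1 := (S8.supp_exp hβs (hprimeβ q Pk.2 hsup1)
        (Finsupp.mem_support_iff.1 hsup1)).2
      have e2 := (S8.supp_exp hβs (hprimeβ q Pk'.2 hsup2)
        (Finsupp.mem_support_iff.1 hsup2)).2
      exact Prod.ext (hq.trans hq'.symm) (e1.symm.trans e2)
    have hPα : ∏ Pk ∈ α.support.filter (fun Pk => ∃ q : ℕ+, Pk.1 = pure q),
          (∏ jj : Fin (α Pk), pvm Pk jj ^ Pk.2)
        = ∏ q ∈ (α.support.filter (fun Pk => ∃ q : ℕ+, Pk.1 = pure q)).image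
            (fun Pk => S8.qofU Pk.1), q ^ expP α q := by
      rw [Finset.prod_image hinjα]
      refine Finset.prod_congr rfl fun Pk hPk => ?_
      obtain ⟨hs, q, hq⟩ := Finset.mem_filter.1 hPk
      rw [S8.qofU_spec hq]
      have hsup : ((pure q : Ultrafilter ℕ+), Pk.2) ∈ α.support := by
        rw [← (Prod.ext hq rfl : Pk = ((pure q : Ultrafilter ℕ+), Pk.2))]; exact hs
      have hse := S8.supp_exp hαs (hprimeα q Pk.2 hsup) (Finsupp.mem_support_iff.1 hsup)
      have hone : α Pk = 1 := by
        rw [(Prod.ext hq rfl : Pk = ((pure q : Ultrafilter ℕ+), Pk.2))]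
        exact hse.1
      have hpvmq : ∀ jj : Fin (α Pk), pvm Pk jj = q := by
        intro jj
        have hmm := hpm1 Pk jj
        rw [S8.modA_pure A _ hq] at hmm
        exact hmm.2
      calc (∏ jj : Fin (α Pk), pvm Pk jj ^ Pk.2)
          = ∏ _jj : Fin (α Pk), q ^ Pk.2 :=
            Finset.prod_congr rfl fun jj _ => by rw [hpvmq jj]
        _ = (q ^ Pk.2) ^ (α Pk) := by
            rw [Finset.prod_const, Finset.card_univ, Fintype.card_fin]
        _ = q ^ expP α q := by rw [hone, pow_one, hse.2]
    have hPβ : ∏ Pk ∈ β.support.filter (fun Pk => ∃ q : ℕ+, Pk.1 = pure q),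
          (∏ jj : Fin (β Pk), pvn Pk jj ^ Pk.2)
        = ∏ q ∈ (β.support.filter (fun Pk => ∃ q : ℕ+, Pk.1 = pure q)).image
            (fun Pk => S8.qofU Pk.1), q ^ expP β q := by
      rw [Finset.prod_image hinjβ]
      refine Finset.prod_congr rfl fun Pk hPk => ?_
      obtain ⟨hs, q, hq⟩ := Finset.mem_filter.1 hPk
      rw [S8.qofU_spec hq]
      have hsup : ((pure q : Ultrafilter ℕ+), Pk.2) ∈ β.support := by
        rw [← (Prod.ext hq rfl : Pk = ((pure q : Ultrafilter ℕ+), Pk.2))]; exact hs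
      have hse := S8.supp_exp hβs (hprimeβ q Pk.2 hsup) (Finsupp.mem_support_iff.1 hsup)
      have hone : β Pk = 1 := by
        rw [(Prod.ext hq rfl : Pk = ((pure q : Ultrafilter ℕ+), Pk.2))]
        exact hse.1
      have hpvnq : ∀ jj : Fin (β Pk), pvn Pk jj = q := by
        intro jj
        have hmm := hpn1 Pk jj
        rw [S8.modA_pure A _ hq] at hmm
        exact hmm.2
      calc (∏ jj : Fin (β Pk), pvn Pk jj ^ Pk.2)
          = ∏ _jj : Fin (β Pk), q ^ Pk.2 :=
            Finset.prod_congr rfl fun jj _ => by rw [hpvnq jj]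
        _ = (q ^ Pk.2) ^ (β Pk) := by
            rw [Finset.prod_const, Finset.card_univ, Fintype.card_fin]
        _ = q ^ expP β q := by rw [hone, pow_one, hse.2]
    have hQαγ : (α.support.filter (fun Pk => ∃ q : ℕ+, Pk.1 = pure q)).image
          (fun Pk => S8.qofU Pk.1)
        ⊆ (γ.support.filter (fun Pk => ∃ q : ℕ+, Pk.1 = pure q)).image
          (fun Pk => S8.qofU Pk.1) := by
      intro q hq
      obtain ⟨Pk, hPk, rfl⟩ := Finset.mem_image.1 hq
      obtain ⟨hs, q', hq'⟩ := Finset.mem_filter.1 hPk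
      rw [S8.qofU_spec hq']
      have hsup : ((pure q' : Ultrafilter ℕ+), Pk.2) ∈ α.support := by
        rw [← (Prod.ext hq' rfl : Pk = ((pure q' : Ultrafilter ℕ+), Pk.2))]; exact hs
      have hq'' := hprimeα q' Pk.2 hsup
      have he := (S8.supp_exp hαs hq'' (Finsupp.mem_support_iff.1 hsup)).2
      have hpos : 0 < expP α q' + expP β q' := by
        have := (hα _ hsup).2; omega
      exact Finset.mem_image.2 ⟨((pure q' : Ultrafilter ℕ+), expP α q' + expP β q'),
        Finset.mem_filter.2 ⟨hge q' hq'' hpos, ⟨q', rfl⟩⟩, S8.qofU_spec rfl⟩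
    have hQβγ : (β.support.filter (fun Pk => ∃ q : ℕ+, Pk.1 = pure q)).image
          (fun Pk => S8.qofU Pk.1)
        ⊆ (γ.support.filter (fun Pk => ∃ q : ℕ+, Pk.1 = pure q)).image
          (fun Pk => S8.qofU Pk.1) := by
      intro q hq
      obtain ⟨Pk, hPk, rfl⟩ := Finset.mem_image.1 hq
      obtain ⟨hs, q', hq'⟩ := Finset.mem_filter.1 hPk
      rw [S8.qofU_spec hq']
      have hsup : ((pure q' : Ultrafilter ℕ+), Pk.2) ∈ β.support := by
        rw [← (Prod.ext hq' rfl : Pk = ((pure q' : Ultrafilter ℕ+), Pk.2))]; exact hs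
      have hq'' := hprimeβ q' Pk.2 hsup
      have he := (S8.supp_exp hβs hq'' (Finsupp.mem_support_iff.1 hsup)).2
      have hpos : 0 < expP α q' + expP β q' := by
        have := (hβ _ hsup).2; omega
      exact Finset.mem_image.2 ⟨((pure q' : Ultrafilter ℕ+), expP α q' + expP β q'),
        Finset.mem_filter.2 ⟨hge q' hq'' hpos, ⟨q', rfl⟩⟩, S8.qofU_spec rfl⟩
    have hQsplit : ∏ q ∈ (γ.support.filter (fun Pk => ∃ q : ℕ+, Pk.1 = pure q)).image
            (fun Pk => S8.qofU Pk.1), q ^ (expP α q + expP β q)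
        = (∏ q ∈ (α.support.filter (fun Pk => ∃ q : ℕ+, Pk.1 = pure q)).image
            (fun Pk => S8.qofU Pk.1), q ^ expP α q)
          * ∏ q ∈ (β.support.filter (fun Pk => ∃ q : ℕ+, Pk.1 = pure q)).image
            (fun Pk => S8.qofU Pk.1), q ^ expP β q := by
      have h1 : ∏ q ∈ (γ.support.filter (fun Pk => ∃ q : ℕ+, Pk.1 = pure q)).image
            (fun Pk => S8.qofU Pk.1), q ^ (expP α q + expP β q)
          = (∏ q ∈ (γ.support.filter (fun Pk => ∃ q : ℕ+, Pk.1 = pure q)).image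
              (fun Pk => S8.qofU Pk.1), q ^ expP α q)
            * ∏ q ∈ (γ.support.filter (fun Pk => ∃ q : ℕ+, Pk.1 = pure q)).image
              (fun Pk => S8.qofU Pk.1), q ^ expP β q := by
        rw [← Finset.prod_mul_distrib]
        exact Finset.prod_congr rfl fun q _ => pow_add q _ _
      rw [h1]
      congr 1
      · refine (Finset.prod_subset hQαγ ?_).symm
        intro q hq hq'
        have h0 : expP α q = 0 := by
          by_contra hc
          obtain ⟨hsup, hp⟩ := S8.exp_supp hα hαs hc
          exact hq' (Finset.mem_image.2 ⟨_, Finset.mem_filter.2 ⟨hsup, ⟨q, rfl⟩⟩,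
            S8.qofU_spec rfl⟩)
        rw [h0, pow_zero]
      · refine (Finset.prod_subset hQβγ ?_).symm
        intro q hq hq'
        have h0 : expP β q = 0 := by
          by_contra hc
          obtain ⟨hsup, hp⟩ := S8.exp_supp hβ hβs hc
          exact hq' (Finset.mem_image.2 ⟨_, Finset.mem_filter.2 ⟨hsup, ⟨q, rfl⟩⟩,
            S8.qofU_spec rfl⟩)
        rw [h0, pow_zero]
    rw [← Finset.prod_filter_mul_prod_filter_not α.support
        (fun Pk => ∃ q : ℕ+, Pk.1 = pure q),
      ← Finset.prod_filter_mul_prod_filter_not β.support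
        (fun Pk => ∃ q : ℕ+, Pk.1 = pure q),
      ← Finset.prod_filter_mul_prod_filter_not γ.support
        (fun Pk => ∃ q : ℕ+, Pk.1 = pure q)]
    have hNγ : ∏ Pk ∈ γ.support.filter (fun Pk => ¬ ∃ q : ℕ+, Pk.1 = pure q),
          (∏ jj : Fin (γ Pk), (S8.combine α β γ hγ1 pvm pvn Pk jj) ^ Pk.2)
        = (∏ Pk ∈ γ.support.filter (fun Pk => ¬ ∃ q : ℕ+, Pk.1 = pure q),
            (∏ jj : Fin (α Pk), pvm Pk jj ^ Pk.2))
          * ∏ Pk ∈ γ.support.filter (fun Pk => ¬ ∃ q : ℕ+, Pk.1 = pure q),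
            (∏ jj : Fin (β Pk), pvn Pk jj ^ Pk.2) := by
      rw [← Finset.prod_mul_distrib]
      exact Finset.prod_congr rfl keyNP
    rw [hNγ, hPγ, hQsplit, hPα, hPβ, ← hNPα, ← hNPβ]
    exact mul_mul_mul_comm _ _ _ _
end

section
/- Let P be a nonprincipal ultrafilter on ℕ with ℙ ∈ P, and let n ≥ 1. Then the set of ultrafilters F on ℕ such that A^{(2)} ∈ F for every A ∈ P with A ⊆ ℙ has exactly n elements if and only if P is n-Ramsey. -/
/-- `A^{(2)} = {ab : a, b ∈ A, a ≠ b}`. -/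
def pairSq (A : Set ℕ+) : Set ℕ+ := {x | ∃ a ∈ A, ∃ b ∈ A, a ≠ b ∧ x = a * b}

/-- `F` satisfies the partition property for `n`: for every coloring of the
two-element subsets of `ℕ` with `n+1` colors there is `A ∈ F` such that the
pairs from `A` get at most `n` colors. -/
def PartProp (F : Ultrafilter ℕ+) (n : ℕ) : Prop :=
  ∀ c : Sym2 ℕ+ → Fin (n + 1), ∃ A ∈ F,
    Set.ncard {i : Fin (n + 1) | ∃ a ∈ A, ∃ b ∈ A, a ≠ b ∧ c s(a, b) = i} ≤ n

/-- `F` is `n`-Ramsey: `n` is the smallest positive integer for which `F`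
satisfies the partition property. -/
def NRamsey (F : Ultrafilter ℕ+) (n : ℕ) : Prop :=
  PartProp F n ∧ ∀ m : ℕ, 0 < m → PartProp F m → n ≤ m

/-!
Write `S` for the set of ultrafilters in the statement. For every `m`, `P` has the partition
property for `m` exactly when `S` has at most `m` elements.

If `F₀, …, Fₘ ∈ S` are distinct, separate them by pairwise disjoint sets `Yᵢ ∈ Fᵢ` (the
Stone space is Hausdorff) and colour `{a, b}` by the `i` with `ab ∈ Yᵢ`. Each `A ∈ P` can be
shrunk to consist of primes, and then `A^{(2)} ∩ Yᵢ ∈ Fᵢ` is nonempty, so `A` sees all `m + 1`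
colours. Conversely, from a colouring with `m + 1` colours all of which occur on every `A ∈ P`,
let `Dᵢ` be the set of products of two primes whose pair has colour `i`; every
`A^{(2)} ∩ Dᵢ` with `A ⊆ ℙ` in `P` is nonempty, so some `Fᵢ ∈ S` contains `Dᵢ`. Unique
factorisation makes the `Dᵢ` pairwise disjoint, hence the `Fᵢ` are distinct.

As `P` is nonprincipal it fails the property for `0`, so `S` is nonempty, and `|S| = n` is
then exactly the statement that `n` is the least positive `m` with the property.
-/

open Set Filter Function

lemma Set.le_encard_iff_exists_injective {α : Type*} {S : Set α} {k : ℕ} :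
    (k : ℕ∞) ≤ S.encard ↔ ∃ f : Fin k → α, Injective f ∧ ∀ i, f i ∈ S := by
  constructor
  · intro h
    obtain ⟨y, -⟩ := Fin.Embedding.exists_embedding_disjoint_range_of_add_le_ENat_card
      (s := (∅ : Set S)) (n := k) (by simpa using h)
    exact ⟨fun i => y i, Subtype.val_injective.comp y.injective, fun i => (y i).2⟩
  · rintro ⟨f, hf, hS⟩
    calc (k : ℕ∞) = (range f).encard := by
          rw [← image_univ, hf.injOn.encard_image, encard_univ, ENat.card_eq_coe_fintype_card,
            Fintype.card_fin]
      _ ≤ S.encard := encard_le_encard (range_subset_iff.2 hS)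

lemma Ultrafilter.exists_pairwise_disjoint_mem {α ι : Type*} [Finite ι] {f : ι → Ultrafilter α}
    (hf : Injective f) : ∃ Y : ι → Set α, (∀ i, Y i ∈ f i) ∧ Pairwise (Disjoint on Y) := by
  obtain ⟨U, hU, hdisj⟩ := (finite_range f).t2_separation
  have hbasic : ∀ i, ∃ s ∈ f i, {F : Ultrafilter α | s ∈ F} ⊆ U (f i) := fun i => by
    obtain ⟨_, ⟨s, rfl⟩, hs, hsU⟩ :=
      ultrafilterBasis_is_basis.exists_subset_of_mem_open (hU (f i)).1 (hU (f i)).2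
    exact ⟨s, hs, hsU⟩
  choose Y hYmem hYU using hbasic
  refine ⟨Y, hYmem, fun i j hij => Set.disjoint_left.2 fun z hzi hzj => ?_⟩
  -- the principal ultrafilter at `z` would lie in both separating neighbourhoods
  have hz : ∀ k, z ∈ Y k → pure z ∈ U (f k) := fun k hk => hYU k hk
  exact Set.disjoint_left.1 (hdisj (mem_range_self i) (mem_range_self j) (hf.ne hij))
    (hz i hzi) (hz j hzj)

lemma sym2_eq_of_prime_mul_eq {a b a' b' : ℕ+} (ha : (a : ℕ).Prime) (hb : (b : ℕ).Prime)
    (ha' : (a' : ℕ).Prime) (h : a * b = a' * b') : s(a, b) = s(a', b') := by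
  have hdvd : (a' : ℕ) ∣ a * b := ⟨b', by exact_mod_cast h⟩
  rcases (Nat.Prime.dvd_mul ha').1 hdvd with h' | h'
  · obtain rfl : a' = a := PNat.coe_injective ((Nat.prime_dvd_prime_iff_eq ha' ha).1 h')
    rw [mul_left_cancel h]
  · obtain rfl : a' = b := PNat.coe_injective ((Nat.prime_dvd_prime_iff_eq ha' hb).1 h')
    rw [mul_comm] at h
    rw [mul_left_cancel h, Sym2.eq_swap]

lemma pairSq_mono : Monotone pairSq := by
  rintro A B hAB x ⟨a, ha, b, hb, hab, rfl⟩
  exact ⟨a, hAB ha, b, hAB hb, hab, rfl⟩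

lemma not_partProp_iff {F : Ultrafilter ℕ+} {m : ℕ} :
    ¬ PartProp F m ↔ ∃ c : Sym2 ℕ+ → Fin (m + 1),
      ∀ A ∈ F, ∀ i, ∃ a ∈ A, ∃ b ∈ A, a ≠ b ∧ c s(a, b) = i := by
  have hfull : ∀ T : Set (Fin (m + 1)), m < T.ncard ↔ T = univ := fun T => by
    constructor
    · exact fun h => eq_of_subset_of_ncard_le (subset_univ T) (by simpa using h)
    · rintro rfl; simp
  simp only [PartProp, ne_eq, not_forall, not_exists, not_and, not_le, hfull, eq_univ_iff_forall,
    mem_ofPred_eq]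

lemma not_partProp_zero {F : Ultrafilter ℕ+} (hF : ∀ x : ℕ+, F ≠ pure x) : ¬ PartProp F 0 := by
  refine not_partProp_iff.2 ⟨fun _ => 0, fun A hA i => ?_⟩
  have hA' : A.Nontrivial := by
    by_contra hsub
    obtain ⟨x, -, hx⟩ :=
      Ultrafilter.eq_pure_of_finite_mem (not_nontrivial_iff.1 hsub).finite hA
    exact hF x hx
  obtain ⟨a, ha, b, hb, hab⟩ := hA'
  exact ⟨a, ha, b, hb, hab, (Fin.fin_one_eq_zero i).symm⟩

def pairUltrafilters (P : Ultrafilter ℕ+) : Set (Ultrafilter ℕ+) :=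
  {F | ∀ A ∈ P, A ⊆ primes → pairSq A ∈ F}

lemma exists_mem_pairUltrafilters {P : Ultrafilter ℕ+} {D : Set ℕ+}
    (hD : ∀ A ∈ P, (pairSq (A ∩ primes) ∩ D).Nonempty) :
    ∃ F ∈ pairUltrafilters P, D ∈ F := by
  have hmono : Monotone fun A => pairSq (A ∩ primes) ∩ D :=
    fun A B hAB => inter_subset_inter_left D (pairSq_mono (inter_subset_inter_left _ hAB))
  have hne := (lift'_neBot_iff hmono).2 hD
  obtain ⟨F, hF⟩ := @exists_ultrafilter_le _ _ hne
  have hmem : ∀ A ∈ P, pairSq (A ∩ primes) ∩ D ∈ F := le_lift'.1 hF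
  refine ⟨F, fun A hA hAp => ?_, mem_of_superset (hmem univ univ_mem) inter_subset_right⟩
  simpa [inter_eq_left.2 hAp] using mem_of_superset (hmem A hA) inter_subset_left

def colorClass {k : ℕ} (c : Sym2 ℕ+ → Fin k) (i : Fin k) : Set ℕ+ :=
  {x | ∃ a b : ℕ+, (a : ℕ).Prime ∧ (b : ℕ).Prime ∧ c s(a, b) = i ∧ x = a * b}

lemma pairwise_disjoint_colorClass {k : ℕ} (c : Sym2 ℕ+ → Fin k) :
    Pairwise (Disjoint on colorClass c) := by
  rintro i j hij
  refine Set.disjoint_left.2 ?_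
  rintro _ ⟨a, b, ha, hb, rfl, rfl⟩ ⟨a', b', ha', -, rfl, h⟩
  exact hij (by rw [sym2_eq_of_prime_mul_eq ha hb ha' h])

lemma exists_injective_of_not_partProp {P : Ultrafilter ℕ+} (hP : primes ∈ P) {m : ℕ}
    (h : ¬ PartProp P m) :
    ∃ f : Fin (m + 1) → Ultrafilter ℕ+, Injective f ∧ ∀ i, f i ∈ pairUltrafilters P := by
  obtain ⟨c, hc⟩ := not_partProp_iff.1 h
  have hF : ∀ i, ∃ F ∈ pairUltrafilters P, colorClass c i ∈ F := fun i =>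
    exists_mem_pairUltrafilters fun A hA => by
      obtain ⟨a, ha, b, hb, hab, hci⟩ := hc _ (inter_mem hA hP) i
      exact ⟨a * b, ⟨a, ha, b, hb, hab, rfl⟩, a, b, ha.2, hb.2, hci, rfl⟩
  choose f hfS hfD using hF
  refine ⟨f, fun i j hij => by_contra fun hne => ?_, hfS⟩
  obtain ⟨x, hxi, hxj⟩ := Ultrafilter.nonempty_of_mem (inter_mem (hfD i) (hij ▸ hfD j))
  exact Set.disjoint_left.1 (pairwise_disjoint_colorClass c hne) hxi hxj

lemma not_partProp_of_injective {P : Ultrafilter ℕ+} (hP : primes ∈ P) {m : ℕ}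
    {f : Fin (m + 1) → Ultrafilter ℕ+} (hf : Injective f) (hS : ∀ i, f i ∈ pairUltrafilters P) :
    ¬ PartProp P m := by
  classical
  obtain ⟨Y, hYmem, hYdisj⟩ := Ultrafilter.exists_pairwise_disjoint_mem hf
  let g : ℕ+ → Fin (m + 1) := fun x => if h : ∃ i, x ∈ Y i then h.choose else 0
  have hg : ∀ x i, x ∈ Y i → g x = i := fun x i hx => by
    have h : ∃ i, x ∈ Y i := ⟨i, hx⟩
    simp only [g, dif_pos h]
    by_contra hne
    exact Set.disjoint_left.1 (hYdisj hne) h.choose_spec hx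
  refine not_partProp_iff.2
    ⟨Sym2.lift ⟨fun a b => g (a * b), fun a b => congrArg g (mul_comm a b)⟩, fun A hA i => ?_⟩
  obtain ⟨_, ⟨a, ha, b, hb, hab, rfl⟩, hx⟩ := Ultrafilter.nonempty_of_mem
    (inter_mem (hS i _ (inter_mem hA hP) inter_subset_right) (hYmem i))
  exact ⟨a, ha.1, b, hb.1, hab, hg _ _ hx⟩

lemma partProp_iff_encard_le {P : Ultrafilter ℕ+} (hP : primes ∈ P) (m : ℕ) :
    PartProp P m ↔ (pairUltrafilters P).encard ≤ m := by
  rw [← not_iff_not, not_le, ← ENat.add_one_le_iff (ENat.natCast_ne_top m), ← Nat.cast_succ,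
    le_encard_iff_exists_injective]
  exact ⟨exists_injective_of_not_partProp hP,
    fun ⟨f, hf, hS⟩ => not_partProp_of_injective hP hf hS⟩

theorem stmt11 (P : Ultrafilter ℕ+) (hnp : ∀ m : ℕ+, P ≠ pure m) (hP : primes ∈ P)
    (n : ℕ) (hn : 1 ≤ n) :
    Set.ncard {F : Ultrafilter ℕ+ | ∀ A ∈ P, A ⊆ primes → pairSq A ∈ F} = n ↔
      NRamsey P n := by
  change (pairUltrafilters P).ncard = n ↔ _
  have hpos : (pairUltrafilters P).encard ≠ 0 := fun h =>
    not_partProp_zero hnp ((partProp_iff_encard_le hP 0).2 (by simp [h]))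
  simp only [NRamsey, partProp_iff_encard_le hP]
  constructor
  · intro h
    have hfin : (pairUltrafilters P).Finite := finite_of_ncard_pos (by omega)
    rw [← hfin.cast_ncard_eq, h]
    exact ⟨le_rfl, fun m _ hm => by exact_mod_cast hm⟩
  · rintro ⟨hle, hmin⟩
    have hfin := finite_of_encard_le_coe hle
    rw [← hfin.cast_ncard_eq] at hle hmin hpos
    norm_cast at hle hmin hpos
    exact le_antisymm hle (hmin _ (Nat.pos_of_ne_zero hpos) le_rfl)
end

section
/- Assume the Continuum Hypothesis. Then there exists a nonprincipal ultrafilter P on ℕ with ℙ ∈ P such that for every n ≥ 2, the set of ultrafilters F on ℕ satisfying A^{(n)} ∈ F for every A ∈ P with A ⊆ ℙ has cardinality 2^𝔠, where 𝔠 = 2^{ℵ₀}. -/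
/-- `A^{(n)} = {a_1⋯a_n : a_1,…,a_n ∈ A pairwise distinct}`. -/
def distinctProd (A : Set ℕ+) (n : ℕ) : Set ℕ+ :=
  {x | ∃ l : List ℕ+, l.length = n ∧ l.Nodup ∧ (∀ a ∈ l, a ∈ A) ∧ l.prod = x}

/-!
Fix a nonprincipal ultrafilter `Q` on `ℕ`, let `Qᵐ` be its `m`-fold tensor power on lists of
length `m`, and code lists injectively by primes. `P` is the `Q`-limit of the images of the `Qᵐ`,
so a set `A ∈ P` contains, for `Q`-many `m`, the primes along a tree of lists of length `m` that
branches `Q`-often at every node. In such a tree one finds `n ≥ 2` branches sharing a prefix of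
any prescribed length `k` and forking right after it; the product of their primes lies in
`A^{(n)}`, and by unique factorisation it determines `k`. So the sets `D_k` of such products are
pairwise disjoint, and for each `k` some ultrafilter `u_k` contains `D_k` and every `A^{(n)}`,
`A ∈ P`. The map `W ↦ W-lim u_k` then embeds `βℕ`, which has `2^𝔠` points (an independent family
of size `𝔠` on a countable set), into the set of ultrafilters in question.
-/

open Filter Set Function Cardinal

namespace Ultrafilter

variable {α β ι : Type*}

theorem mem_bind {f : Ultrafilter α} {m : α → Ultrafilter β} {s : Set β} :
    s ∈ f.bind m ↔ {a | s ∈ m a} ∈ f :=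
  Iff.rfl

section PairwiseDisjoint

variable {u : ι → Ultrafilter β} {D : ι → Set β}

theorem biUnion_mem_bind {W : Ultrafilter ι} (hu : ∀ i, D i ∈ u i) {s : Set ι} (hs : s ∈ W) :
    (⋃ i ∈ s, D i) ∈ W.bind u :=
  mem_bind.2 <| mem_of_superset hs fun i hi =>
    mem_of_superset (hu i) (subset_biUnion_of_mem (u := D) hi)

theorem mem_iff_biUnion_mem_bind (hD : Pairwise (Disjoint on D)) (hu : ∀ i, D i ∈ u i)
    (W : Ultrafilter ι) (s : Set ι) : s ∈ W ↔ (⋃ i ∈ s, D i) ∈ W.bind u := by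
  refine ⟨biUnion_mem_bind hu, fun h => by_contra fun hs => ?_⟩
  have hdisj : Disjoint (⋃ i ∈ sᶜ, D i) (⋃ i ∈ s, D i) := by
    simp only [disjoint_iUnion_left, disjoint_iUnion_right]
    exact fun i hi j hj => hD (ne_of_mem_of_not_mem hi hj).symm
  exact (compl_mem_iff_notMem.1 <| mem_of_superset
    (biUnion_mem_bind hu (compl_mem_iff_notMem.2 hs)) hdisj.subset_compl_right) h

theorem bind_injective_of_pairwise_disjoint (hD : Pairwise (Disjoint on D))
    (hu : ∀ i, D i ∈ u i) : Injective fun W : Ultrafilter ι => W.bind u := fun W W' h =>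
  Ultrafilter.ext fun s => by
    rw [mem_iff_biUnion_mem_bind hD hu, mem_iff_biUnion_mem_bind hD hu,
      show W.bind u = W'.bind u from h]

end PairwiseDisjoint

def tensorPow (U : Ultrafilter α) : ℕ → Ultrafilter (List α)
  | 0 => pure []
  | m + 1 => U.bind fun a => (U.tensorPow m).map (a :: ·)

variable {U : Ultrafilter α}

@[simp]
theorem mem_tensorPow_zero {s : Set (List α)} : s ∈ U.tensorPow 0 ↔ [] ∈ s :=
  Iff.rfl

theorem mem_tensorPow_succ {m : ℕ} {s : Set (List α)} :
    s ∈ U.tensorPow (m + 1) ↔ {a | {l | a :: l ∈ s} ∈ U.tensorPow m} ∈ U :=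
  Iff.rfl

theorem mem_tensorPow_add {j i : ℕ} {s : Set (List α)} :
    s ∈ U.tensorPow (j + i) ↔ {r | {t | r ++ t ∈ s} ∈ U.tensorPow i} ∈ U.tensorPow j := by
  induction j generalizing s with
  | zero => simp
  | succ j ih =>
    rw [Nat.succ_add, mem_tensorPow_succ, mem_tensorPow_succ]
    simp only [ih, List.cons_append, mem_ofPred_eq]

theorem setOf_length_mem_tensorPow (m : ℕ) : {l : List α | l.length = m} ∈ U.tensorPow m := by
  induction m with
  | zero => simp
  | succ m ih =>
    rw [mem_tensorPow_succ]
    exact univ_mem' fun a => mem_of_superset ih fun l hl => by simp_all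

theorem map_head?_tensorPow_succ (m : ℕ) :
    (U.tensorPow (m + 1)).map List.head? = U.map some := by
  ext s
  simp only [mem_map, mem_tensorPow_succ, preimage, mem_ofPred_eq, List.head?_cons]
  congr! with a
  by_cases h : some a ∈ s <;> simp [h, ← mem_coe]

theorem setOf_nodup_map_mem_tensorPow {f : α → β} (hf : ∀ b, f ⁻¹' {b} ∉ U) {s : Set α}
    (hs : s ∈ U) (n : ℕ) :
    {l | l.length = n ∧ (∀ a ∈ l, a ∈ s) ∧ (l.map f).Nodup} ∈ U.tensorPow n := by
  induction n generalizing s with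
  | zero => simp
  | succ m ih =>
    rw [mem_tensorPow_succ]
    refine mem_of_superset hs fun a ha => ?_
    have hs' : s ∩ (f ⁻¹' {f a})ᶜ ∈ U := inter_mem hs (compl_mem_iff_notMem.2 (hf (f a)))
    refine mem_of_superset (ih hs') ?_
    rintro l ⟨hlen, hmem, hnd⟩
    refine ⟨by simp [hlen], ?_, ?_⟩
    · simpa [ha] using fun b hb => (hmem b hb).1
    · simp only [List.map_cons, List.nodup_cons, List.mem_map, not_exists, not_and, hnd,
        and_true]
      exact fun b hb hfb => (hmem b hb).2 hfb

end Ultrafilter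

section IndependentFamily

open Classical

variable {α : Type*}

theorem exists_finset_injOn_filter (𝒮 : Finset (Set α)) :
    ∃ F : Finset α, InjOn (fun S : Set α => F.filter (· ∈ S)) ↑𝒮 := by
  rcases isEmpty_or_nonempty α with _ | _
  · exact ⟨∅, fun S _ T _ _ => Subsingleton.elim S T⟩
  have hsep : ∀ S T : Set α, S ≠ T → ∃ x, ¬(x ∈ S ↔ x ∈ T) := fun S T h => by
    by_contra! hc
    exact h (Set.ext hc)
  choose! sep hsep using hsep
  refine ⟨(𝒮 ×ˢ 𝒮).image fun p => sep p.1 p.2,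
    fun S hS T hT h => by_contra fun hST => ?_⟩
  have hx : sep S T ∈ (𝒮 ×ˢ 𝒮).image fun p => sep p.1 p.2 :=
    Finset.mem_image_of_mem _ (Finset.mk_mem_product hS hT)
  exact hsep S T hST (by simpa [hx] using congrArg (sep S T ∈ ·) h)

-- Hausdorff's independent family: finitely many `traceSet S` and complements always meet.
def traceSet (S : Set α) : Set (Finset α × Finset (Finset α)) :=
  {b | b.1.filter (· ∈ S) ∈ b.2}

theorem exists_forall_mem_traceSet_iff (𝒮 : Set (Set α)) (I : Finset (Set α)) :
    ∃ b, ∀ S ∈ I, b ∈ traceSet S ↔ S ∈ 𝒮 := by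
  obtain ⟨F, hF⟩ := exists_finset_injOn_filter I
  refine ⟨(F, (I.filter (· ∈ 𝒮)).image fun S => F.filter (· ∈ S)), fun S hS => ?_⟩
  simp only [traceSet, mem_ofPred_eq, Finset.mem_image, Finset.mem_filter]
  refine ⟨?_, fun h => ⟨S, ⟨hS, h⟩, rfl⟩⟩
  rintro ⟨T, ⟨hT, hT𝒮⟩, hTS⟩
  rwa [← hF hT hS hTS]

theorem exists_ultrafilter_forall_traceSet_iff (𝒮 : Set (Set α)) :
    ∃ U : Ultrafilter (Finset α × Finset (Finset α)),
      ∀ S, {b | b ∈ traceSet S ↔ S ∈ 𝒮} ∈ U := by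
  set Y : Set α → Set (Finset α × Finset (Finset α)) := fun S => {b | b ∈ traceSet S ↔ S ∈ 𝒮}
  obtain ⟨U, hU⟩ := Ultrafilter.exists_ultrafilter_of_finite_inter_nonempty (range Y)
    fun T hT => by
      obtain ⟨I, -, rfl⟩ := Finset.subset_set_image_iff.1 (image_univ (f := Y) ▸ hT)
      obtain ⟨b, hb⟩ := exists_forall_mem_traceSet_iff 𝒮 I
      exact ⟨b, by simpa [Y] using hb⟩
  exact ⟨U, fun S => hU (mem_range_self S)⟩

theorem two_power_two_power_le_mk_ultrafilter :
    2 ^ (2 ^ #α : Cardinal) ≤ #(Ultrafilter (Finset α × Finset (Finset α))) := by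
  choose U hU using exists_ultrafilter_forall_traceSet_iff (α := α)
  rw [← mk_set, ← mk_set]
  refine mk_le_of_injective (f := U) fun 𝒮 𝒮' h => Set.ext fun S => by_contra fun hS => ?_
  refine (U 𝒮).empty_notMem (mem_of_superset (inter_mem (hU 𝒮 S) (h ▸ hU 𝒮' S)) ?_)
  rintro b ⟨h₁, h₂⟩
  exact hS (h₁.symm.trans h₂)

end IndependentFamily

theorem Cardinal.mk_ultrafilter (α : Type*) [Infinite α] :
    #(Ultrafilter α) = 2 ^ (2 ^ #α : Cardinal) := by
  refine le_antisymm ?_ ?_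
  · rw [← mk_set, ← mk_set]
    exact mk_le_of_injective (f := fun U : Ultrafilter α => {s | s ∈ U}) fun U V h =>
      Ultrafilter.ext fun s => Set.ext_iff.1 h s
  · obtain ⟨e⟩ : Nonempty (Finset α × Finset (Finset α) ≃ α) :=
      Cardinal.eq.1 (by simp [mk_finset_of_infinite])
    refine two_power_two_power_le_mk_ultrafilter.trans
      (mk_le_of_injective (f := Ultrafilter.map e) ?_)
    refine LeftInverse.injective (g := Ultrafilter.map e.symm) fun U => ?_
    rw [Ultrafilter.map_map, e.symm_comp_self, Ultrafilter.map_id]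

namespace List

variable {α : Type*}

def IsFork (r : List α) (S : Set (List α)) : Prop :=
  (∀ l ∈ S, r <+: l) ∧ ∃ a b, r ++ a ∈ S ∧ r ++ b ∈ S ∧ a.head? ≠ b.head?

theorem IsPrefix.head?_eq {a a' : List α} (h : a' <+: a) (ha' : a' ≠ []) :
    a.head? = a'.head? := by
  obtain ⟨x, rfl⟩ := h
  cases a' with
  | nil => exact absurd rfl ha'
  | cons => rfl

theorem prefix_of_prefix_append_of_head?_ne {r r' a b : List α} (ha : r' <+: r ++ a)
    (hb : r' <+: r ++ b) (hab : a.head? ≠ b.head?) : r' <+: r := by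
  rcases prefix_or_prefix_of_prefix ha (prefix_append r a) with h | ⟨c, rfl⟩
  · exact h
  rcases eq_or_ne c [] with rfl | hc
  · simp
  have hca : c <+: a := (prefix_append_right_inj r).1 ha
  have hcb : c <+: b := (prefix_append_right_inj r).1 hb
  exact absurd ((hca.head?_eq hc).trans (hcb.head?_eq hc).symm) hab

theorem IsFork.prefix {r r' : List α} {S : Set (List α)} (h : r.IsFork S) (h' : r'.IsFork S) :
    r' <+: r := by
  obtain ⟨a, b, ha, hb, hab⟩ := h.2
  exact prefix_of_prefix_append_of_head?_ne (h'.1 _ ha) (h'.1 _ hb) hab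

theorem IsFork.eq {r r' : List α} {S : Set (List α)} (h : r.IsFork S) (h' : r'.IsFork S) :
    r = r' :=
  (h'.prefix h).eq_of_length (le_antisymm (h'.prefix h).length_le (h.prefix h').length_le)

end List

noncomputable def listPrime (l : List ℕ) : ℕ+ :=
  ⟨Nat.nth Nat.Prime (Encodable.encode l), (Nat.prime_nth_prime _).pos⟩

theorem listPrime_mem_primes (l : List ℕ) : listPrime l ∈ primes :=
  Nat.prime_nth_prime _

theorem listPrime_injective : Injective listPrime := fun _ _ h =>
  Encodable.encode_injective <|
    Nat.nth_injective Nat.infinite_setOfPred_prime (congrArg PNat.val h)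

theorem listPrime_dvd_prod_map_iff {l : List ℕ} {L : List (List ℕ)} :
    listPrime l ∣ (L.map listPrime).prod ↔ l ∈ L := by
  rw [PNat.dvd_iff, ← PNat.coe_coeMonoidHom, map_list_prod, PNat.coe_coeMonoidHom,
    (Nat.Prime.prime (listPrime_mem_primes l)).dvd_prod_iff]
  simp only [List.map_map, List.mem_map, comp_apply]
  refine ⟨?_, fun hl => ⟨_, ⟨l, hl, rfl⟩, dvd_rfl⟩⟩
  rintro ⟨_, ⟨l', hl', rfl⟩, hdvd⟩
  rwa [listPrime_injective (PNat.coe_injective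
    ((Nat.prime_dvd_prime_iff_eq (listPrime_mem_primes l) (listPrime_mem_primes l')).1 hdvd))]

section Construction

open Ultrafilter

noncomputable def primeTreeUltrafilter : Ultrafilter ℕ+ :=
  (hyperfilter ℕ).bind fun m => ((hyperfilter ℕ).tensorPow m).map listPrime

theorem mem_primeTreeUltrafilter {A : Set ℕ+} :
    A ∈ primeTreeUltrafilter ↔
      {m | listPrime ⁻¹' A ∈ (hyperfilter ℕ).tensorPow m} ∈ hyperfilter ℕ :=
  Iff.rfl

theorem primes_mem_primeTreeUltrafilter : primes ∈ primeTreeUltrafilter := by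
  rw [mem_primeTreeUltrafilter, preimage_eq_univ_iff.2 (range_subset_iff.2 listPrime_mem_primes)]
  exact univ_mem' fun m => univ_mem

theorem primeTreeUltrafilter_ne_pure (x : ℕ+) : primeTreeUltrafilter ≠ pure x := by
  intro h
  have hx : {x} ∈ primeTreeUltrafilter := h ▸ Ultrafilter.mem_pure.2 rfl
  refine notMem_hyperfilter_of_finite ?_ (mem_primeTreeUltrafilter.1 hx)
  have hfin : (listPrime ⁻¹' {x}).Finite :=
    (subsingleton_singleton.preimage listPrime_injective).finite
  refine (hfin.image List.length).subset fun m hm => ?_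
  exact Ultrafilter.nonempty_of_mem (inter_mem hm (setOf_length_mem_tensorPow m))

noncomputable def forkProd (r : List ℕ) (ts : List (List ℕ)) : ℕ+ :=
  ((ts.map (r ++ ·)).map listPrime).prod

theorem forkProd_mem_distinctProd {A : Set ℕ+} {r : List ℕ} {ts : List (List ℕ)}
    (hA : ∀ t ∈ ts, listPrime (r ++ t) ∈ A) (hnd : (ts.map List.head?).Nodup) :
    forkProd r ts ∈ distinctProd A ts.length := by
  refine ⟨(ts.map (r ++ ·)).map listPrime, by simp, ?_, by simpa using hA, rfl⟩
  exact ((hnd.of_map _).map (List.append_right_injective r)).map listPrime_injective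

theorem isFork_forkProd (r : List ℕ) {ts : List (List ℕ)} (hts : 2 ≤ ts.length)
    (hnd : (ts.map List.head?).Nodup) : r.IsFork {l | listPrime l ∣ forkProd r ts} := by
  simp only [forkProd, listPrime_dvd_prod_map_iff, List.mem_map]
  refine ⟨?_, ?_⟩
  · rintro _ ⟨t, -, rfl⟩
    exact List.prefix_append r t
  rcases ts with _ | ⟨a, _ | ⟨b, rest⟩⟩
  · simp at hts
  · simp at hts
  refine ⟨a, b, ⟨a, by simp, rfl⟩, ⟨b, by simp, rfl⟩, ?_⟩
  simp only [List.map_cons, List.nodup_cons, List.mem_cons] at hnd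
  exact fun h => hnd.1 (Or.inl h)

def forkSet (k : ℕ) : Set ℕ+ :=
  {x | ∃ r : List ℕ, r.length = k ∧ r.IsFork {l | listPrime l ∣ x}}

theorem pairwise_disjoint_forkSet : Pairwise (Disjoint on forkSet) :=
  fun _ _ hkk' => Set.disjoint_left.2 fun _ ⟨_, hr, hf⟩ ⟨_, hr', hf'⟩ =>
    hkk' (hr ▸ hr' ▸ congrArg List.length (hf.eq hf'))

theorem head?_preimage_singleton_notMem_tensorPow {α : Type*} [Infinite α] (j : ℕ)
    (b : Option α) : List.head? ⁻¹' {b} ∉ (hyperfilter α).tensorPow (j + 1) := by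
  rw [← Ultrafilter.mem_map, map_head?_tensorPow_succ, Ultrafilter.mem_map]
  exact notMem_hyperfilter_of_finite
    (subsingleton_singleton.preimage (Option.some_injective α)).finite

noncomputable def forkUltrafilter (n k j : ℕ) : Ultrafilter ℕ+ :=
  ((hyperfilter ℕ).tensorPow k).bind fun r =>
    (((hyperfilter ℕ).tensorPow (j + 1)).tensorPow n).map (forkProd r)

theorem mem_forkUltrafilter_of {X : Set ℕ+} {n k j : ℕ} {R : Set (List ℕ)}
    (hR : R ∈ (hyperfilter ℕ).tensorPow k) (s : List ℕ → Set (List ℕ))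
    (hs : ∀ r ∈ R, s r ∈ (hyperfilter ℕ).tensorPow (j + 1))
    (hX : ∀ r ∈ R, ∀ ts : List (List ℕ), ts.length = n → (∀ t ∈ ts, t ∈ s r) →
      (ts.map List.head?).Nodup → forkProd r ts ∈ X) :
    X ∈ forkUltrafilter n k j := by
  refine Ultrafilter.mem_bind.2 (mem_of_superset hR fun r hr => ?_)
  rw [mem_ofPred_eq, Ultrafilter.mem_map]
  refine mem_of_superset (setOf_nodup_map_mem_tensorPow
    (head?_preimage_singleton_notMem_tensorPow j) (hs r hr) n) ?_
  rintro ts ⟨hlen, hmem, hnd⟩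
  exact hX r hr ts hlen hmem hnd

theorem forkSet_mem_forkUltrafilter {n : ℕ} (hn : 2 ≤ n) (k j : ℕ) :
    forkSet k ∈ forkUltrafilter n k j :=
  mem_forkUltrafilter_of (setOf_length_mem_tensorPow k) (fun _ => univ) (fun _ _ => univ_mem)
    fun r hr _ hlen _ hnd => ⟨r, hr, isFork_forkProd r (hlen ▸ hn) hnd⟩

theorem distinctProd_mem_forkUltrafilter {A : Set ℕ+} {k j : ℕ}
    (hA : listPrime ⁻¹' A ∈ (hyperfilter ℕ).tensorPow (k + (j + 1))) (n : ℕ) :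
    distinctProd A n ∈ forkUltrafilter n k j :=
  mem_forkUltrafilter_of (mem_tensorPow_add.1 hA) _ (fun _ hr => hr)
    fun _ _ _ hlen hmem hnd => hlen ▸ forkProd_mem_distinctProd hmem hnd

-- The total length `k + (m - (k + 1) + 1)` is `m` only for `m > k`, i.e. for almost all `m`.
noncomputable def forkLimit (n k : ℕ) : Ultrafilter ℕ+ :=
  (hyperfilter ℕ).bind fun m => forkUltrafilter n k (m - (k + 1))

theorem forkSet_mem_forkLimit {n : ℕ} (hn : 2 ≤ n) (k : ℕ) : forkSet k ∈ forkLimit n k :=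
  Ultrafilter.mem_bind.2 <| univ_mem' fun _ => forkSet_mem_forkUltrafilter hn k _

theorem distinctProd_mem_forkLimit {A : Set ℕ+} (hA : A ∈ primeTreeUltrafilter) (n k : ℕ) :
    distinctProd A n ∈ forkLimit n k := by
  have hk : Ici (k + 1 : ℕ) ∈ hyperfilter ℕ :=
    mem_hyperfilter_of_finite_compl (by rw [compl_Ici]; exact finite_Iio _)
  refine Ultrafilter.mem_bind.2 <|
    mem_of_superset (inter_mem (mem_primeTreeUltrafilter.1 hA) hk) ?_
  rintro m ⟨hm, hkm⟩
  refine distinctProd_mem_forkUltrafilter ?_ n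
  rwa [show k + (m - (k + 1) + 1) = m by grind]

end Construction

open Ultrafilter in
theorem stmt12_general :
    ∃ P : Ultrafilter ℕ+, (∀ m : ℕ+, P ≠ pure m) ∧ primes ∈ P ∧
      ∀ n : ℕ, 2 ≤ n →
        Cardinal.mk ↥{F : Ultrafilter ℕ+ | ∀ A ∈ P, A ⊆ primes → distinctProd A n ∈ F}
          = 2 ^ Cardinal.continuum := by
  refine ⟨primeTreeUltrafilter, primeTreeUltrafilter_ne_pure, primes_mem_primeTreeUltrafilter,
    fun n hn => ?_⟩
  have h𝔠 (α : Type) [Countable α] [Infinite α] : #(Ultrafilter α) = 2 ^ 𝔠 := by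
    rw [mk_ultrafilter, mk_eq_aleph0, two_power_aleph0]
  refine le_antisymm ((mk_set_le _).trans (h𝔠 ℕ+).le) ?_
  rw [← h𝔠 ℕ]
  refine mk_le_of_injective (f := fun W => ⟨W.bind (forkLimit n), fun A hA _ =>
    mem_bind.2 (univ_mem' fun k => distinctProd_mem_forkLimit hA n k)⟩) fun W W' h => ?_
  exact bind_injective_of_pairwise_disjoint pairwise_disjoint_forkSet (forkSet_mem_forkLimit hn)
    (congrArg Subtype.val h)

theorem stmt12 (hCH : Cardinal.continuum = Cardinal.aleph 1) :
    ∃ P : Ultrafilter ℕ+, (∀ m : ℕ+, P ≠ pure m) ∧ primes ∈ P ∧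
      ∀ n : ℕ, 2 ≤ n →
        Cardinal.mk ↥{F : Ultrafilter ℕ+ | ∀ A ∈ P, A ⊆ primes → distinctProd A n ∈ F}
          = 2 ^ Cardinal.continuum :=
  stmt12_general
end

section
/- Let P and Q be distinct nonprincipal ultrafilters on ℕ with ℙ ∈ P and ℙ ∈ Q. If there is exactly one ultrafilter F on ℕ satisfying AB ∈ F for all A ∈ P and B ∈ Q with A ⊆ ℙ, B ⊆ ℙ and A ∩ B = ∅, then both P and Q are P-points. -/
/-- `AB = {ab : a ∈ A, b ∈ B}`. -/
def setMul (A B : Set ℕ+) : Set ℕ+ := {x | ∃ a ∈ A, ∃ b ∈ B, x = a * b}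

/-- A nonprincipal ultrafilter `U` is a P-point if for every partition
`{A_n : n ∈ ω}` of `ℕ` with `A_n ∉ U` for all `n` there is `B ∈ U` such that
`B ∩ A_n` is finite for every `n`. -/
def PPoint (U : Ultrafilter ℕ+) : Prop :=
  (∀ m : ℕ+, U ≠ pure m) ∧
  ∀ A : ℕ → Set ℕ+, (∀ n, A n ∉ U) → (∀ m n, m ≠ n → A m ∩ A n = ∅) →
    (⋃ n, A n) = Set.univ → ∃ B ∈ U, ∀ n, (B ∩ A n).Finite


/-! If `P` is not a P-point, a partition witnessing this gives a map `i : ℕ+ → ℕ` that tends to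
infinity along `P` while every `A ∈ P` meets some fibre of `i` in an infinite set. Colour a product `pq` of
primes `p < q` by whether `i` reverses the order of `p` and `q`. Comparing an infinite fibre of
`A` with the (infinite) `B ∈ Q` shows that every `AB` contains products of both colours, so the
filter `P * Q` is not an ultrafilter. But the ultrafilters containing every `AB` with `A`, `B`
disjoint sets of primes are exactly those finer than `P * Q`, and if there is only one of them,
`P * Q` must be that ultrafilter. -/

open Filter Pointwise

lemma setMul_eq_mul (A B : Set ℕ+) : setMul A B = A * B := by
  ext x
  simp only [setMul, Set.mem_ofPred_eq, Set.mem_mul, eq_comm]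

lemma Nat.Prime.eq_and_eq_of_mul_eq_mul {p q p' q' : ℕ} (hp : p.Prime) (hq : q.Prime)
    (hp' : p'.Prime) (hq' : q'.Prime) (hpq : p < q) (hpq' : p' < q') (h : p * q = p' * q') :
    p = p' ∧ q = q' := by
  have hpp' : p = p' := by
    rcases hp.dvd_mul.1 (Dvd.intro q h) with h1 | h1 <;>
      rcases hp'.dvd_mul.1 (Dvd.intro q' h.symm) with h2 | h2 <;>
      simp only [Nat.prime_dvd_prime_iff_eq hp hp', Nat.prime_dvd_prime_iff_eq hp hq',
        Nat.prime_dvd_prime_iff_eq hp' hp, Nat.prime_dvd_prime_iff_eq hp' hq] at h1 h2 <;>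
      omega
  subst hpp'
  exact ⟨rfl, Nat.eq_of_mul_eq_mul_left hp.pos h⟩

lemma exists_eq_preimage_singleton {α : Type*} {C : ℕ → Set α}
    (hdisj : ∀ m n, m ≠ n → C m ∩ C n = ∅) (hcov : ⋃ n, C n = Set.univ) :
    ∃ i : α → ℕ, C = fun n => i ⁻¹' {n} := by
  have hmem : ∀ x, ∃ n, x ∈ C n := fun x => Set.mem_iUnion.1 (hcov ▸ Set.mem_univ x)
  choose i hi using hmem
  refine ⟨i, funext fun n => Set.ext fun x => ⟨fun hx => ?_, fun hx => ?_⟩⟩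
  · by_contra hne
    exact Set.eq_empty_iff_forall_notMem.1 (hdisj _ _ hne) x ⟨hi x, hx⟩
  · rw [← show i x = n from hx]
    exact hi x

lemma Set.Infinite.exists_infinite_fiber_or_infinite_gt {α : Type*} {B : Set α}
    (hB : B.Infinite) (i : α → ℕ) (n : ℕ) :
    (∃ m ≤ n, (B ∩ i ⁻¹' {m}).Infinite) ∨ (B ∩ {b | n < i b}).Infinite := by
  by_contra h
  simp only [not_or, not_exists, not_and, Set.not_infinite] at h
  obtain ⟨hle, hgt⟩ := h
  refine hB (((Set.finite_Iic n).biUnion hle |>.union hgt).subset fun b hb => ?_)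
  by_cases hbn : n < i b
  · exact Or.inr ⟨hb, hbn⟩
  · exact Or.inl (Set.mem_biUnion (Set.mem_Iic.2 (not_lt.1 hbn)) ⟨hb, rfl⟩)

namespace Ultrafilter

variable {α : Type*}

lemma exists_mem_compl_mem_of_ne {P Q : Ultrafilter α} (h : P ≠ Q) : ∃ S ∈ P, Sᶜ ∈ Q := by
  obtain ⟨S, hSP, hSQ⟩ := Filter.not_le.1 (mt eq_of_le h.symm)
  exact ⟨S, hSP, compl_mem_iff_notMem.2 hSQ⟩

lemma infinite_of_mem {U : Ultrafilter α} (hU : ∀ m, U ≠ pure m) {S : Set α} (hS : S ∈ U) :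
    S.Infinite := fun hfin => by
  obtain ⟨x, -, hx⟩ := eq_pure_of_finite_mem hfin hS
  exact hU x hx

lemma tendsto_atTop_of_preimage_singleton_notMem {U : Ultrafilter α} {i : α → ℕ}
    (h : ∀ n, i ⁻¹' {n} ∉ U) : Tendsto i U atTop := by
  rcases (U.map i).le_cofinite_or_eq_pure with hle | ⟨n, hn⟩
  · rwa [← Nat.cofinite_eq_atTop]
  · exact absurd (show {n} ∈ U.map i from hn ▸ Set.mem_singleton n) (h n)

end Ultrafilter

lemma Filter.mem_or_compl_mem_of_existsUnique_ultrafilter_le {α : Type*} {f : Filter α}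
    (h : ∃! u : Ultrafilter α, ↑u ≤ f) (s : Set α) : s ∈ f ∨ sᶜ ∈ f := by
  obtain ⟨u, -, hu⟩ := h
  have hmem : ∀ t ∈ u, t ∈ f := fun t ht => mem_iff_ultrafilter.2 fun g hg => hu g hg ▸ ht
  exact (u.em s).imp (hmem s) (hmem sᶜ)

lemma forall_setMul_mem_iff_le_mul {P Q : Ultrafilter ℕ+} (hPQ : P ≠ Q) (hP : primes ∈ P)
    (hQ : primes ∈ Q) (F : Filter ℕ+) :
    (∀ A ∈ P, ∀ B ∈ Q, A ⊆ primes → B ⊆ primes → A ∩ B = ∅ → setMul A B ∈ F) ↔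
      F ≤ ↑P * ↑Q := by
  simp only [setMul_eq_mul]
  refine ⟨fun h s hs => ?_, fun h A hA B hB _ _ _ => h (mul_mem_mul hA hB)⟩
  obtain ⟨A, hA, B, hB, hAB⟩ := mem_mul.1 hs
  obtain ⟨S, hSP, hSQ⟩ := Ultrafilter.exists_mem_compl_mem_of_ne hPQ
  have hdisj : A ∩ S ∩ primes ∩ (B ∩ Sᶜ ∩ primes) = ∅ :=
    Set.eq_empty_of_forall_notMem fun x hx => hx.2.1.2 hx.1.1.2
  have hprod := h _ (inter_mem (inter_mem hA hSP) hP) _ (inter_mem (inter_mem hB hSQ) hQ)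
    Set.inter_subset_right Set.inter_subset_right hdisj
  exact mem_of_superset hprod <| (Set.mul_subset_mul
    (Set.inter_subset_left.trans Set.inter_subset_left)
    (Set.inter_subset_left.trans Set.inter_subset_left)).trans hAB

def invertedPrimeProducts (i : ℕ+ → ℕ) : Set ℕ+ :=
  {x | ∃ p ∈ primes, ∃ q ∈ primes, p < q ∧ i q < i p ∧ x = p * q}

section invertedPrimeProducts

variable {i : ℕ+ → ℕ}

lemma mul_mem_invertedPrimeProducts_iff {a b : ℕ+} (ha : a ∈ primes) (hb : b ∈ primes)
    (hab : a < b) : a * b ∈ invertedPrimeProducts i ↔ i b < i a := by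
  refine ⟨?_, fun h => ⟨a, ha, b, hb, hab, h, rfl⟩⟩
  rintro ⟨p, hp, q, hq, hpq, hi, he⟩
  obtain ⟨hap, hbq⟩ := Nat.Prime.eq_and_eq_of_mul_eq_mul ha hb hp hq hab hpq
    (by exact_mod_cast congrArg PNat.val he)
  rwa [PNat.coe_inj.1 hap, PNat.coe_inj.1 hbq]

variable {A B : Set ℕ+} (hA : A ⊆ primes) (hB : B ⊆ primes) {n : ℕ}
  (hAn : (A ∩ i ⁻¹' {n}).Infinite) (hBinf : B.Infinite)
include hA hB hAn hBinf

lemma exists_mul_mem_invertedPrimeProducts (hAi : ∀ m, ∃ a ∈ A, m < i a) :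
    ∃ a ∈ A, ∃ b ∈ B, a * b ∈ invertedPrimeProducts i := by
  rcases hBinf.exists_infinite_fiber_or_infinite_gt i n with ⟨m, hmn, hm⟩ | hgt
  · obtain ⟨a, haA, ha⟩ := hAi n
    obtain ⟨b, ⟨hbB, hb : i b = m⟩, hab⟩ := hm.exists_gt a
    refine ⟨a, haA, b, hbB, ?_⟩
    rw [mul_mem_invertedPrimeProducts_iff (hA haA) (hB hbB) hab]
    omega
  · obtain ⟨b, hbB, hb⟩ := hgt.nonempty
    obtain ⟨a, ⟨haA, ha : i a = n⟩, hba⟩ := hAn.exists_gt b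
    refine ⟨a, haA, b, hbB, ?_⟩
    rw [mul_comm, mul_mem_invertedPrimeProducts_iff (hB hbB) (hA haA) hba]
    exact ha ▸ hb

lemma exists_mul_notMem_invertedPrimeProducts :
    ∃ a ∈ A, ∃ b ∈ B, a * b ∉ invertedPrimeProducts i := by
  rcases hBinf.exists_infinite_fiber_or_infinite_gt i n with ⟨m, hmn, hm⟩ | hgt
  · obtain ⟨b, hbB, hb : i b = m⟩ := hm.nonempty
    obtain ⟨a, ⟨haA, ha : i a = n⟩, hba⟩ := hAn.exists_gt b
    refine ⟨a, haA, b, hbB, ?_⟩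
    rw [mul_comm, mul_mem_invertedPrimeProducts_iff (hB hbB) (hA haA) hba]
    omega
  · obtain ⟨a, haA, ha : i a = n⟩ := hAn.nonempty
    obtain ⟨b, ⟨hbB, hb⟩, hab⟩ := hgt.exists_gt a
    refine ⟨a, haA, b, hbB, ?_⟩
    rw [mul_mem_invertedPrimeProducts_iff (hA haA) (hB hbB) hab]
    exact not_lt.2 (ha ▸ hb.le)

end invertedPrimeProducts

theorem pPoint_of_forall_mem_mul_or_compl_mem {P Q : Ultrafilter ℕ+} (hnpP : ∀ m, P ≠ pure m)
    (hnpQ : ∀ m, Q ≠ pure m) (hP : primes ∈ P) (hQ : primes ∈ Q)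
    (hultra : ∀ X : Set ℕ+, X ∈ (P : Filter ℕ+) * Q ∨ Xᶜ ∈ (P : Filter ℕ+) * Q) : PPoint P := by
  refine ⟨hnpP, fun C hC hdisj hcov => ?_⟩
  by_contra! hfib
  obtain ⟨i, rfl⟩ := exists_eq_preimage_singleton hdisj hcov
  have hi : Tendsto i P atTop := Ultrafilter.tendsto_atTop_of_preimage_singleton_notMem hC
  have hsplit : ∀ A ∈ P, ∀ B ∈ Q, (∃ a ∈ A, ∃ b ∈ B, a * b ∈ invertedPrimeProducts i) ∧
      ∃ a ∈ A, ∃ b ∈ B, a * b ∉ invertedPrimeProducts i := by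
    intro A hA B hB
    have hAp := inter_mem hA hP
    obtain ⟨n, hn⟩ := hfib _ hAp
    have hBinf := Ultrafilter.infinite_of_mem hnpQ (inter_mem hB hQ)
    have hAi : ∀ m, ∃ a ∈ A ∩ primes, m < i a := fun m =>
      ((hi.eventually_gt_atTop m).and hAp).exists.imp fun _ h => ⟨h.2, h.1⟩
    obtain ⟨a, ha, b, hb, hab⟩ := exists_mul_mem_invertedPrimeProducts Set.inter_subset_right
      Set.inter_subset_right hn hBinf hAi
    obtain ⟨a', ha', b', hb', hab'⟩ := exists_mul_notMem_invertedPrimeProducts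
      Set.inter_subset_right Set.inter_subset_right hn hBinf
    exact ⟨⟨a, ha.1, b, hb.1, hab⟩, a', ha'.1, b', hb'.1, hab'⟩
  rcases hultra (invertedPrimeProducts i) with h | h <;>
    obtain ⟨A, hA, B, hB, hAB⟩ := mem_mul.1 h
  · obtain ⟨a, ha, b, hb, hab⟩ := (hsplit A hA B hB).2
    exact hab (hAB (Set.mul_mem_mul ha hb))
  · obtain ⟨a, ha, b, hb, hab⟩ := (hsplit A hA B hB).1
    exact hAB (Set.mul_mem_mul ha hb) hab

theorem stmt14 (P Q : Ultrafilter ℕ+) (hPQ : P ≠ Q)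
    (hnpP : ∀ m : ℕ+, P ≠ pure m) (hnpQ : ∀ m : ℕ+, Q ≠ pure m)
    (hP : primes ∈ P) (hQ : primes ∈ Q)
    (huniq : ∃! F : Ultrafilter ℕ+, ∀ A ∈ P, ∀ B ∈ Q,
      A ⊆ primes → B ⊆ primes → A ∩ B = ∅ → setMul A B ∈ F) :
    PPoint P ∧ PPoint Q := by
  have hunique : ∃! F : Ultrafilter ℕ+, ↑F ≤ (P : Filter ℕ+) * Q :=
    (existsUnique_congr fun F : Ultrafilter ℕ+ => forall_setMul_mem_iff_le_mul hPQ hP hQ F).1 huniq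
  have hultra := mem_or_compl_mem_of_existsUnique_ultrafilter_le hunique
  refine ⟨pPoint_of_forall_mem_mul_or_compl_mem hnpP hnpQ hP hQ hultra,
    pPoint_of_forall_mem_mul_or_compl_mem hnpQ hnpP hQ hP ?_⟩
  simpa only [mul_comm (Q : Filter ℕ+)] using hultra
end

section
/- Let F be an ultrafilter on ℕ and ⟨G_n : n ∈ ℕ⟩ a family of ultrafilters on ℕ. Let H = lim_{n→F} G_n and let K = Σ_{n→F} G_n be the ultrafilter defined by: A ∈ K iff {n ∈ ℕ : A/n ∈ G_n} ∈ F, where A/n = {k ∈ ℕ : nk ∈ A} (equivalently, K = lim_{n→F}(n·G_n), with n·G_n the image of G_n under multiplication by n). Then F ∣~ K and H ∣~ K. -/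
theorem stmt16 (F : Ultrafilter ℕ+) (G : ℕ+ → Ultrafilter ℕ+)
    (H K : Ultrafilter ℕ+)
    -- `H = lim_{n→F} G_n`
    (hH : ∀ A : Set ℕ+, A ∈ H ↔ {n : ℕ+ | A ∈ G n} ∈ F)
    -- `K = Σ_{n→F} G_n` : `A ∈ K` iff `{n : A/n ∈ G_n} ∈ F`,
    -- where `A/n = {k : nk ∈ A}`
    (hK : ∀ A : Set ℕ+, A ∈ K ↔ {n : ℕ+ | {k : ℕ+ | n * k ∈ A} ∈ G n} ∈ F) :
    udvd F K ∧ udvd H K := by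
  constructor
  · intro A hA
    rw [hK]
    refine F.toFilter.mem_of_superset hA ?_
    intro n hn
    have : {k : ℕ+ | n * k ∈ upcl A} = Set.univ := by
      ext k; simp only [Set.mem_setOf_eq, Set.mem_univ, iff_true]
      exact ⟨n, hn, Dvd.intro k rfl⟩
    simp only [Set.mem_setOf_eq, this]
    exact Filter.univ_mem
  · intro A hA
    rw [hK]
    refine F.toFilter.mem_of_superset ((hH A).mp hA) ?_
    intro n hn
    refine (G n).toFilter.mem_of_superset hn ?_
    intro k hk
    exact ⟨k, hk, Dvd.intro_left n rfl⟩
end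

section
/- For every ultrafilter M on ℕ, the following are equivalent: (1) M is self-divisible, i.e. D(M) = {n ∈ ℕ : nℕ ∈ M} ∈ M, where nℕ = {nk : k ∈ ℕ}; (2) the relation ≡_M is an equivalence relation on βℤ. -/
/-- The tensor product of ultrafilters on `ℤ`:
`A ∈ F ⊗ G` iff `{x : {y : (x,y) ∈ A} ∈ G} ∈ F`. -/
def tensor (F G : Ultrafilter ℤ) : Ultrafilter (ℤ × ℤ) :=
  F.bind fun x => Ultrafilter.map (fun y => (x, y)) G

/-- `F ≡_M G`: for every `A ∈ M`,
`{(x,y) : ∃ m ∈ A, m ∣ x − y} ∈ F ⊗ G`. -/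
def congMod (M : Ultrafilter ℕ+) (F G : Ultrafilter ℤ) : Prop :=
  ∀ A ∈ M, {p : ℤ × ℤ | ∃ m ∈ A, ((m : ℕ) : ℤ) ∣ p.1 - p.2} ∈ tensor F G

/-!
If `D(M) ∈ M`, then `F ≡_M G` holds iff `F` and `G` induce the same ultrafilter on `ZMod n` for
`M`-almost every `n`, which is plainly an equivalence relation.

If `D(M) ∉ M`, transitivity fails: `pure 0 ≡_M Y ≡_M Z` but not `pure 0 ≡_M Z`. For every `A ∈ M`,
`Y` lives on integers that are divisible by some element of `A` and congruent, modulo some element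
of `A`, to `M`-almost every integer (solvable by the Chinese remainder theorem, because `M`-almost
every `m'` meets a fixed `m` only in a divisor in `D(M)`). `Z` follows the residues of `M` modulo
every `L` but avoids the multiples of all elements of some `B ∈ M`: build `z₀, z₁, …`, where `zₙ`
follows `M` modulo `n / 2 + 1` and shares with the earlier terms only divisors in `D(M)`; then the
even-indexed and the odd-indexed terms have no common divisor outside `D(M)`, so `M`-almost every
number outside `D(M)` divides no term of one of the two families.
-/

open Filter

namespace Nat

theorem exists_pos_modEq_coprime {u l : ℕ} (hul : u.Coprime l) (hl : l ≠ 0) {P : ℕ}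
    (hP : P ≠ 0) : ∃ U, 0 < U ∧ U ≡ u [MOD l] ∧ U.Coprime P := by
  have : NeZero (l * P) := ⟨mul_ne_zero hl hP⟩
  obtain ⟨w, hw⟩ := ZMod.unitsMap_surjective (dvd_mul_right l P) (ZMod.unitOfCoprime u hul)
  have hval : (w : ZMod (l * P)).val ≡ u [MOD l] := by
    rw [← ZMod.natCast_eq_natCast_iff, ZMod.natCast_val]
    exact congrArg Units.val hw
  refine ⟨(w : ZMod (l * P)).val + l * P, by positivity, ?_, ?_⟩
  · exact (Nat.add_mul_mod_self_left _ _ _).trans hval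
  · exact (Nat.coprime_add_self_left.2 (ZMod.val_coe_unit_coprime w)).coprime_mul_left_right

theorem exists_pos_modEq_gcd_dvd_gcd {a L P : ℕ} (ha : 0 < a) (hL : 0 < L) (hP : P ≠ 0) :
    ∃ z, 0 < z ∧ z ≡ a [MOD L] ∧ gcd z P ∣ gcd a L := by
  set d := gcd a L
  have hd : 0 < d := Nat.gcd_pos_of_pos_left L ha
  obtain ⟨U, hU, hUu, hUP⟩ := exists_pos_modEq_coprime (Nat.coprime_div_gcd_div_gcd hd)
    (Nat.div_pos (Nat.le_of_dvd hL (Nat.gcd_dvd_right a L)) hd).ne' hP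
  refine ⟨d * U, Nat.mul_pos hd hU, ?_, ?_⟩
  · have := hUu.mul_left' d
    rwa [Nat.mul_div_cancel' (Nat.gcd_dvd_left a L),
      Nat.mul_div_cancel' (Nat.gcd_dvd_right a L)] at this
  · exact (hUP.coprime_dvd_right (Nat.gcd_dvd_right _ _)).symm.dvd_of_dvd_mul_right
      (Nat.gcd_dvd_left _ _)

end Nat

namespace Ultrafilter

variable {α : Type*}

theorem exists_forall_mem_of_directed {ι : Type*} [Nonempty ι] {s : ι → Set α}
    (hd : Directed (· ⊇ ·) s) (hne : ∀ i, (s i).Nonempty) : ∃ U : Ultrafilter α, ∀ i, s i ∈ U := by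
  have : NeBot (⨅ i, 𝓟 (s i)) := by
    refine iInf_neBot_of_directed' (fun i j => ?_) fun i => principal_neBot_iff.2 (hne i)
    obtain ⟨k, hi, hj⟩ := hd i j
    exact ⟨k, principal_mono.2 hi, principal_mono.2 hj⟩
  exact ⟨Ultrafilter.of _, fun i => Ultrafilter.of_le _ (mem_iInf_of_mem i (mem_principal_self _))⟩

theorem exists_eventually_dvd_sub (U : Ultrafilter α) (f : α → ℤ) (m : ℕ) [NeZero m] :
    ∃ a, ∀ᶠ x in U, (m : ℤ) ∣ f x - f a := by
  obtain ⟨c, hc⟩ := (U.map fun x => (f x : ZMod m)).eq_pure_of_finite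
  have hcU : (fun x => (f x : ZMod m)) ⁻¹' {c} ∈ U := by
    rw [← Ultrafilter.mem_map, hc]
    rfl
  obtain ⟨a, ha⟩ := U.nonempty_of_mem hcU
  exact ⟨a, mem_of_superset hcU fun x hx =>
    (ZMod.intCast_eq_intCast_iff_dvd_sub _ _ _).1 (ha.trans hx.symm)⟩

theorem eventually_dvd_sub_iff_map_eq (F G : Ultrafilter ℤ) (n : ℕ) [NeZero n] :
    (∀ᶠ x in F, ∀ᶠ y in G, (n : ℤ) ∣ x - y) ↔
      F.map (Int.cast : ℤ → ZMod n) = G.map Int.cast := by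
  constructor
  · intro h
    refine Ultrafilter.coe_le_coe.1 fun S hS => Ultrafilter.mem_map.2 ?_
    filter_upwards [h] with x hx
    have hSG : ∀ᶠ y : ℤ in G, (y : ZMod n) ∈ S := Ultrafilter.mem_map.1 hS
    obtain ⟨y, hyS, hy⟩ := (hSG.and hx).exists
    rwa [Set.mem_preimage, ← (ZMod.intCast_eq_intCast_iff_dvd_sub _ _ _).2 hy]
  · intro h
    obtain ⟨a, ha⟩ := F.exists_eventually_dvd_sub id n
    have haG : ∀ᶠ y in G, (n : ℤ) ∣ y - a := by
      have : {c : ZMod n | c = a} ∈ F.map Int.cast :=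
        ha.mono fun x hx => ((ZMod.intCast_eq_intCast_iff_dvd_sub _ _ _).2 hx).symm
      rw [h] at this
      exact mem_of_superset (Ultrafilter.mem_map.1 this) fun y hy =>
        (ZMod.intCast_eq_intCast_iff_dvd_sub _ _ _).1 (Eq.symm hy)
    filter_upwards [ha] with x hx
    filter_upwards [haG] with y hy
    simpa using dvd_sub hx hy

end Ultrafilter

def iterProd (f : ℕ → ℕ+ → ℕ+) : ℕ → ℕ+
  | 0 => 1
  | n + 1 => iterProd f n * f n (iterProd f n)

theorem dvd_iterProd (f : ℕ → ℕ+ → ℕ+) {j n : ℕ} (h : j < n) :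
    (f j (iterProd f j) : ℕ) ∣ iterProd f n := by
  induction n with
  | zero => omega
  | succ n ih =>
    rw [iterProd, PNat.mul_coe]
    rcases Nat.lt_succ_iff_lt_or_eq.1 h with h | rfl
    · exact (ih h).mul_right _
    · exact dvd_mul_left _ _

theorem exists_seq_common_dvd {Q : ℕ → ℕ+ → Prop} {R : ℕ → Prop}
    (h : ∀ n (P : ℕ+), ∃ z : ℕ+, Q n z ∧ ∀ m, m ∣ (z : ℕ) → m ∣ (P : ℕ) → R m) :
    ∃ z : ℕ → ℕ+, (∀ n, Q n (z n)) ∧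
      ∀ j n m, j < n → m ∣ (z j : ℕ) → m ∣ (z n : ℕ) → R m := by
  choose f hfQ hfR using h
  refine ⟨fun n => f n (iterProd f n), fun n => hfQ _ _, fun j n m hjn hj hn => ?_⟩
  exact hfR _ _ m hn (hj.trans (dvd_iterProd f hjn))

/-- The set `D(M)` of `d` with `dℕ ∈ M`. -/
def ultraDivisors (M : Ultrafilter ℕ+) : Set ℕ := {d | ∀ᶠ n : ℕ+ in M, d ∣ (n : ℕ)}

def SelfDivisible (M : Ultrafilter ℕ+) : Prop := ∀ᶠ n : ℕ+ in M, (n : ℕ) ∈ ultraDivisors M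

theorem selfDivisible_iff (M : Ultrafilter ℕ+) :
    SelfDivisible M ↔ {n : ℕ+ | {x : ℕ+ | ∃ k : ℕ+, x = n * k} ∈ M} ∈ M := by
  have h (n : ℕ+) : {x : ℕ+ | ∃ k : ℕ+, x = n * k} = {x : ℕ+ | (n : ℕ) ∣ x} :=
    Set.ext fun _ => PNat.dvd_iff
  simp_rw [h]
  rfl

theorem mem_tensor {F G : Ultrafilter ℤ} {s : Set (ℤ × ℤ)} :
    s ∈ tensor F G ↔ ∀ᶠ x in F, ∀ᶠ y in G, (x, y) ∈ s :=
  Iff.rfl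

variable {M : Ultrafilter ℕ+}

theorem congMod_iff_of_selfDivisible (hD : SelfDivisible M) {F G : Ultrafilter ℤ} :
    congMod M F G ↔ ∀ᶠ n : ℕ+ in M, F.map (Int.cast : ℤ → ZMod n) = G.map Int.cast := by
  constructor
  · intro h
    refine hD.mono fun n hn => ?_
    refine (F.eventually_dvd_sub_iff_map_eq G n).1 ?_
    filter_upwards [mem_tensor.1 (h _ hn)] with x hx
    filter_upwards [hx] with y ⟨m, hnm, hm⟩
    exact (Int.natCast_dvd_natCast.2 hnm).trans hm
  · intro h A hA
    obtain ⟨m, hmA, hm⟩ := ((show ∀ᶠ m in M, m ∈ A from hA).and h).exists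
    refine mem_tensor.2 ?_
    filter_upwards [(F.eventually_dvd_sub_iff_map_eq G m).2 hm] with x hx
    filter_upwards [hx] with y hy
    exact ⟨m, hmA, hy⟩

theorem equivalence_congMod (hD : SelfDivisible M) : Equivalence (congMod M) where
  refl _ := (congMod_iff_of_selfDivisible hD).2 (.of_forall fun _ => rfl)
  symm h := (congMod_iff_of_selfDivisible hD).2 <|
    ((congMod_iff_of_selfDivisible hD).1 h).mono fun _ => Eq.symm
  trans h₁ h₂ := (congMod_iff_of_selfDivisible hD).2 <|
    ((congMod_iff_of_selfDivisible hD).1 h₁).and ((congMod_iff_of_selfDivisible hD).1 h₂)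
      |>.mono fun _ h => h.1.trans h.2

theorem mem_ultraDivisors_of_dvd {d e : ℕ} (hed : e ∣ d) (hd : d ∈ ultraDivisors M) :
    e ∈ ultraDivisors M :=
  hd.mono fun _ h => hed.trans h

theorem gcd_mem_ultraDivisors {L : ℕ} {n₀ : ℕ}
    (h : ∀ᶠ k : ℕ+ in M, (L : ℤ) ∣ k - n₀) : Nat.gcd n₀ L ∈ ultraDivisors M := by
  refine h.mono fun k hk => Int.natCast_dvd_natCast.1 ?_
  have hL : (Nat.gcd n₀ L : ℤ) ∣ L := Int.natCast_dvd_natCast.2 (Nat.gcd_dvd_right _ _)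
  have hn₀ : (Nat.gcd n₀ L : ℤ) ∣ n₀ := Int.natCast_dvd_natCast.2 (Nat.gcd_dvd_left _ _)
  simpa using dvd_add (hL.trans hk) hn₀

theorem exists_dvd_and_eventually_dvd_sub {A : Set ℕ+} (hA : A ∈ M) :
    ∃ y : ℤ, (∃ m ∈ A, (m : ℤ) ∣ y) ∧ ∃ m ∈ A, ∀ᶠ k : ℕ+ in M, (m : ℤ) ∣ y - k := by
  obtain ⟨m, hmA⟩ := M.nonempty_of_mem hA
  obtain ⟨n₀, hn₀⟩ := M.exists_eventually_dvd_sub (fun k : ℕ+ => ((k : ℕ) : ℤ)) m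
  have hgood : ∀ᶠ k : ℕ+ in M, ∀ d ∈ (m : ℕ).divisors, d ∉ ultraDivisors M → ¬ d ∣ (k : ℕ) := by
    refine (eventually_all_finset _).2 fun d _ => ?_
    by_cases hd : d ∈ ultraDivisors M
    · exact .of_forall fun _ h => (h hd).elim
    · exact (Ultrafilter.eventually_not.2 hd).mono fun _ h _ => h
  obtain ⟨m', hm'A, hm'⟩ := ((show ∀ᶠ k in M, k ∈ A from hA).and hgood).exists
  have hg : Nat.gcd m m' ∈ ultraDivisors M := by
    by_contra hg
    exact hm' _ (Nat.mem_divisors.2 ⟨Nat.gcd_dvd_left _ _, m.ne_zero⟩) hg (Nat.gcd_dvd_right _ _)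
  have hgn₀ : (n₀ : ℕ) ≡ 0 [MOD Nat.gcd m m'] := by
    obtain ⟨k, hk, hkg⟩ := (hn₀.and hg).exists
    have hgm : (Nat.gcd m m' : ℤ) ∣ m := Int.natCast_dvd_natCast.2 (Nat.gcd_dvd_left _ _)
    refine Nat.modEq_zero_iff_dvd.2 (Int.natCast_dvd_natCast.1 ?_)
    simpa using dvd_sub (Int.natCast_dvd_natCast.2 hkg) (hgm.trans hk)
  obtain ⟨y, hym, hym'⟩ := Nat.chineseRemainder' hgn₀
  refine ⟨y, ⟨m', hm'A, Int.natCast_dvd_natCast.2 (Nat.modEq_zero_iff_dvd.1 hym')⟩, m, hmA, ?_⟩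
  filter_upwards [hn₀] with k hk
  simpa using dvd_sub hym.symm.dvd hk

theorem exists_eventually_dvd_sub_forall_dvd (L : ℕ) [NeZero L] (P : ℕ+) :
    ∃ z : ℕ+, (∀ᶠ k : ℕ+ in M, (L : ℤ) ∣ z - k) ∧
      ∀ m, m ∣ (z : ℕ) → m ∣ (P : ℕ) → m ∈ ultraDivisors M := by
  obtain ⟨n₀, hn₀⟩ := M.exists_eventually_dvd_sub (fun k : ℕ+ => ((k : ℕ) : ℤ)) L
  obtain ⟨z, hz, hzn₀, hzP⟩ :=
    Nat.exists_pos_modEq_gcd_dvd_gcd n₀.pos (Nat.pos_of_neZero L) P.ne_zero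
  refine ⟨⟨z, hz⟩, hn₀.mono fun k hk => ?_, fun m hmz hmP => ?_⟩
  · simpa using dvd_sub hzn₀.symm.dvd hk
  · exact mem_ultraDivisors_of_dvd ((Nat.dvd_gcd hmz hmP).trans hzP) (gcd_mem_ultraDivisors hn₀)

theorem exists_mem_forall_exists_not_dvd (hD : ¬ SelfDivisible M) :
    ∃ B ∈ M, ∀ L : ℕ+, ∃ z : ℤ, (∀ᶠ k : ℕ+ in M, (L : ℤ) ∣ z - k) ∧ ∀ m ∈ B, ¬ (m : ℤ) ∣ z := by
  obtain ⟨z, hzM, hzD⟩ :=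
    exists_seq_common_dvd (Q := fun n z => ∀ᶠ k : ℕ+ in M, ((n / 2 + 1 : ℕ) : ℤ) ∣ z - k)
      (R := (· ∈ ultraDivisors M)) fun n P => exists_eventually_dvd_sub_forall_dvd (n / 2 + 1) P
  set G : ℕ → Set ℕ+ := fun b => {m | ∃ n, (m : ℕ) ∣ z (2 * n + b)}
  have hG : ∀ m ∈ G 0, m ∈ G 1 → (m : ℕ) ∈ ultraDivisors M := by
    rintro m ⟨i, hi⟩ ⟨j, hj⟩
    rcases lt_or_gt_of_ne (show 2 * i + 0 ≠ 2 * j + 1 by omega) with h | h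
    · exact hzD _ _ _ h hi hj
    · exact hzD _ _ _ h hj hi
  have hN : ∀ᶠ m : ℕ+ in M, (m : ℕ) ∉ ultraDivisors M := Ultrafilter.eventually_not.2 hD
  obtain ⟨b, hb, hB⟩ : ∃ b < 2, ∀ᶠ m : ℕ+ in M, (m : ℕ) ∉ ultraDivisors M ∧ m ∉ G b := by
    by_cases h0 : G 0 ∈ M
    · refine ⟨1, one_lt_two, ?_⟩
      filter_upwards [hN, h0] with m hm hm0
      exact ⟨hm, fun hm1 => hm (hG m hm0 hm1)⟩
    · exact ⟨0, two_pos, hN.and (Ultrafilter.compl_mem_iff_notMem.2 h0)⟩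
  refine ⟨_, hB, fun L => ⟨z (2 * ((L : ℕ) - 1) + b), ?_, fun m hm hdvd => ?_⟩⟩
  · have hL : (2 * ((L : ℕ) - 1) + b) / 2 + 1 = L := by have := L.pos; omega
    simpa [hL] using hzM (2 * ((L : ℕ) - 1) + b)
  · exact hm.2 ⟨_, Int.natCast_dvd_natCast.1 hdvd⟩

theorem exists_ultrafilter_forall_not_dvd {B : Set ℕ+}
    (hB : ∀ L : ℕ+, ∃ z : ℤ, (∀ᶠ k : ℕ+ in M, (L : ℤ) ∣ z - k) ∧ ∀ m ∈ B, ¬ (m : ℤ) ∣ z) :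
    ∃ Z : Ultrafilter ℤ, (∀ L : ℕ+, ∀ᶠ z in Z, ∀ᶠ k : ℕ+ in M, (L : ℤ) ∣ z - k) ∧
      ∀ᶠ z in Z, ∀ m ∈ B, ¬ (m : ℤ) ∣ z := by
  set s : ℕ+ → Set ℤ := fun L => {z | (∀ᶠ k : ℕ+ in M, (L : ℤ) ∣ z - k) ∧ ∀ m ∈ B, ¬ (m : ℤ) ∣ z}
  have hmono {L L' : ℕ+} (h : L ∣ L') : s L' ⊆ s L := fun _ hz =>
    ⟨hz.1.mono fun _ hk => (Int.natCast_dvd_natCast.2 (PNat.dvd_iff.1 h)).trans hk, hz.2⟩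
  obtain ⟨Z, hZ⟩ := Ultrafilter.exists_forall_mem_of_directed (s := s)
    (fun L₁ L₂ => ⟨L₁ * L₂, hmono (dvd_mul_right _ _), hmono (dvd_mul_left _ _)⟩) hB
  exact ⟨Z, fun L => mem_of_superset (hZ L) fun _ hz => hz.1,
    mem_of_superset (hZ 1) fun _ hz => hz.2⟩

theorem exists_ultrafilter_dvd_and_dvd_sub (M : Ultrafilter ℕ+) :
    ∃ Y : Ultrafilter ℤ, ∀ A ∈ M, ∀ᶠ y in Y,
      (∃ m ∈ A, (m : ℤ) ∣ y) ∧ ∃ m ∈ A, ∀ᶠ k : ℕ+ in M, (m : ℤ) ∣ y - k := by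
  have : Nonempty {A // A ∈ M} := ⟨⟨Set.univ, univ_mem⟩⟩
  obtain ⟨Y, hY⟩ := Ultrafilter.exists_forall_mem_of_directed
    (s := fun A : {A // A ∈ M} =>
      {y : ℤ | (∃ m ∈ A.1, (m : ℤ) ∣ y) ∧ ∃ m ∈ A.1, ∀ᶠ k : ℕ+ in M, (m : ℤ) ∣ y - k})
    (fun A₁ A₂ => ⟨⟨A₁.1 ∩ A₂.1, inter_mem A₁.2 A₂.2⟩,
      fun _ ⟨⟨m, hm, h⟩, ⟨m', hm', h'⟩⟩ => ⟨⟨m, hm.1, h⟩, ⟨m', hm'.1, h'⟩⟩,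
      fun _ ⟨⟨m, hm, h⟩, ⟨m', hm', h'⟩⟩ => ⟨⟨m, hm.2, h⟩, ⟨m', hm'.2, h'⟩⟩⟩)
    (fun A => exists_dvd_and_eventually_dvd_sub A.2)
  exact ⟨Y, fun A hA => hY ⟨A, hA⟩⟩

theorem selfDivisible_of_equivalence_congMod (h : Equivalence (congMod M)) :
    SelfDivisible M := by
  by_contra hD
  obtain ⟨B, hB, hBz⟩ := exists_mem_forall_exists_not_dvd hD
  obtain ⟨Z, hZM, hZB⟩ := exists_ultrafilter_forall_not_dvd hBz
  obtain ⟨Y, hY⟩ := exists_ultrafilter_dvd_and_dvd_sub M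
  have h0Y : congMod M (pure 0) Y := fun A hA =>
    (hY A hA).mono fun y ⟨⟨m, hmA, hm⟩, _⟩ => ⟨m, hmA, by simpa using hm⟩
  have hYZ : congMod M Y Z := by
    refine fun A hA => mem_tensor.2 ?_
    filter_upwards [hY A hA] with y ⟨_, m, hmA, hym⟩
    filter_upwards [hZM m] with z hzm
    obtain ⟨k, hyk, hzk⟩ := (hym.and hzm).exists
    exact ⟨m, hmA, by simpa using dvd_sub hyk hzk⟩
  have h0Z : ∀ᶠ z in Z, ∃ m ∈ B, (m : ℤ) ∣ 0 - z :=
    eventually_pure.1 (mem_tensor.1 (h.trans h0Y hYZ B hB))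
  obtain ⟨z, ⟨m, hmB, hm⟩, hz⟩ := (h0Z.and hZB).exists
  exact hz m hmB (by simpa using hm)

theorem stmt18 (M : Ultrafilter ℕ+) :
    -- `M` is self-divisible, i.e. `D(M) = {n : nℕ ∈ M} ∈ M`, iff
    -- `≡_M` is an equivalence relation on `βℤ`.
    {n : ℕ+ | {x : ℕ+ | ∃ k : ℕ+, x = n * k} ∈ M} ∈ M ↔ Equivalence (congMod M) := by
  rw [← selfDivisible_iff]
  exact ⟨equivalence_congMod, selfDivisible_of_equivalence_congMod⟩
end
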